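/- arXiv:1101.4792 — 3 statements merged into one kernel-verified Lean document; each statement's English description precedes it below -/
import Mathlib

section
/- For every prime $\ell$, every $g \ge 1$ and every $d \in \{0,\dots,g\}$, the proportion of matrices in $\mathrm{GL}_g(\mathbb{F}_\ell)$ whose $1$-eigenspace has dimension $d$ equals $\mathfrak{P}_{\mathrm{GL}}(\ell,g,d) = \frac{1}{\#\mathrm{GL}_d(\mathbb{F}_\ell)} \sum_{j=0}^{g-d} \frac{(-1)^j \ell^{(j^2-j)/2}}{\ell^{dj} \cdot \#\mathrm{GL}_j(\mathbb{F}_\ell)}$, where $\#\mathrm{GL}_0(\mathbb{F}_\ell) = 1$. -/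
open Matrix Finset Filter

/-- The standard symplectic form matrix `Ω = [[0, I_g], [-I_g, 0]]` over `ZMod ℓ`. -/
def Om (ℓ g : ℕ) : Matrix (Fin g ⊕ Fin g) (Fin g ⊕ Fin g) (ZMod ℓ) :=
  Matrix.fromBlocks 0 1 (-1) 0

/-- Membership in the group `GSp_{2g}^{(d)}(F_ℓ)` of `d`-symplectic similitudes:
invertible matrices `M` with `Mᵀ Ω M = d Ω`. -/
def inGSp (ℓ g : ℕ) (d : ZMod ℓ) (M : Matrix (Fin g ⊕ Fin g) (Fin g ⊕ Fin g) (ZMod ℓ)) :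
    Prop :=
  IsUnit M.det ∧ Mᵀ * Om ℓ g * M = d • Om ℓ g

/-- The dimension of the eigenspace of `M` for the eigenvalue `1`, i.e. `dim ker (M - I)`. -/
noncomputable def fixdim {n : Type} [Fintype n] [DecidableEq n] {R : Type} [CommRing R]
    (M : Matrix n n R) : ℕ :=
  Module.finrank R (LinearMap.ker (M - 1).mulVecLin)

/-- `𝔓(q, ℓ, g, k)`: the proportion of matrices in `GSp_{2g}^{(d)}(F_ℓ)` whose
`1`-eigenspace is `k`-dimensional. -/
noncomputable def PGSp (ℓ g : ℕ) (d : ZMod ℓ) (k : ℕ) : ℝ :=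
  (Nat.card {M : Matrix (Fin g ⊕ Fin g) (Fin g ⊕ Fin g) (ZMod ℓ) //
      inGSp ℓ g d M ∧ fixdim M = k} : ℝ) /
  (Nat.card {M : Matrix (Fin g ⊕ Fin g) (Fin g ⊕ Fin g) (ZMod ℓ) // inGSp ℓ g d M} : ℝ)

/-- `𝔓_Sp(ℓ, g, k)`: the corresponding proportion for `Sp_{2g}(F_ℓ) = GSp_{2g}^{(1)}(F_ℓ)`. -/
noncomputable def PSp (ℓ g k : ℕ) : ℝ := PGSp ℓ g 1 k

/-- `𝔓_GL(ℓ, g, k)`: the proportion of matrices in `GL_g(F_ℓ)` whose `1`-eigenspace is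
`k`-dimensional. -/
noncomputable def PGL (ℓ g k : ℕ) : ℝ :=
  (Nat.card {M : Matrix (Fin g) (Fin g) (ZMod ℓ) // IsUnit M.det ∧ fixdim M = k} : ℝ) /
  (Nat.card {M : Matrix (Fin g) (Fin g) (ZMod ℓ) // IsUnit M.det} : ℝ)

/-- `#GL_n(F_ℓ)`, with the convention that `GL_0(F_ℓ)` has one element. -/
noncomputable def cardGL (ℓ n : ℕ) : ℕ :=
  Nat.card {M : Matrix (Fin n) (Fin n) (ZMod ℓ) // IsUnit M.det}

noncomputable section QAlg
variable (q : ℝ)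

def PiQ (m : ℕ) : ℝ := ∏ i ∈ range m, (q ^ (i + 1) - 1)
def EQ (n : ℕ) : ℝ := ∏ i ∈ range n, q ^ i
def BQ (m k : ℕ) : ℝ := if k ≤ m then PiQ q m / (PiQ q k * PiQ q (m - k)) else 0

variable {q}

lemma PiQ_pos (hq : 1 < q) (m : ℕ) : 0 < PiQ q m := by
  apply Finset.prod_pos
  intro i _
  have : 1 < q ^ (i + 1) := one_lt_pow₀ hq (Nat.succ_ne_zero i)
  linarith

lemma PiQ_ne (hq : 1 < q) (m : ℕ) : PiQ q m ≠ 0 := (PiQ_pos hq m).ne'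

lemma EQ_pos (hq : 1 < q) (n : ℕ) : 0 < EQ q n := by
  apply Finset.prod_pos
  intro i _
  positivity

lemma PiQ_zero : PiQ q 0 = 1 := by simp [PiQ]
lemma EQ_zero : EQ q 0 = 1 := by simp [EQ]
lemma PiQ_succ (m : ℕ) : PiQ q (m + 1) = PiQ q m * (q ^ (m + 1) - 1) := by
  rw [PiQ, Finset.prod_range_succ]; rfl
lemma EQ_succ (n : ℕ) : EQ q (n + 1) = EQ q n * q ^ n := by
  rw [EQ, Finset.prod_range_succ]; rfl

lemma EQ_add (a b : ℕ) : EQ q (a + b) = EQ q a * EQ q b * q ^ (a * b) := by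
  rw [EQ, Finset.prod_range_add]
  have h : (∏ i ∈ range b, q ^ (a + i)) = q ^ (a * b) * EQ q b := by
    calc (∏ i ∈ range b, q ^ (a + i)) = ∏ i ∈ range b, q ^ a * q ^ i :=
          Finset.prod_congr rfl fun i _ => pow_add q a i
      _ = (∏ _i ∈ range b, q ^ a) * ∏ i ∈ range b, q ^ i := Finset.prod_mul_distrib
      _ = (q ^ a) ^ b * EQ q b := by rw [Finset.prod_const, Finset.card_range]; rfl
      _ = q ^ (a * b) * EQ q b := by rw [← pow_mul]
  rw [h]
  show EQ q a * (q ^ (a * b) * EQ q b) = _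
  ring

lemma PiQ_split {a b : ℕ} (hab : a ≤ b) :
    PiQ q b = PiQ q a * ∏ i ∈ range (b - a), (q ^ (a + i + 1) - 1) := by
  rw [PiQ, show range b = range (a + (b - a)) by rw [Nat.add_sub_cancel' hab],
    Finset.prod_range_add]
  rfl

lemma BQ_zero_left (hq : 1 < q) (m : ℕ) : BQ q m 0 = 1 := by
  rw [BQ, if_pos (Nat.zero_le m), PiQ_zero, Nat.sub_zero, one_mul, div_self (PiQ_ne hq m)]

lemma BQ_self (hq : 1 < q) (m : ℕ) : BQ q m m = 1 := by
  rw [BQ, if_pos le_rfl, Nat.sub_self, PiQ_zero, mul_one, div_self (PiQ_ne hq m)]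

lemma BQ_pascal (hq : 1 < q) (m k : ℕ) :
    BQ q (m + 1) (k + 1) = q ^ (k + 1) * BQ q m (k + 1) + BQ q m k := by
  rcases lt_trichotomy k m with hk | hk | hk
  · -- k + 1 ≤ m
    have h1 : k + 1 ≤ m := hk
    rw [BQ, if_pos (by omega), BQ, if_pos h1, BQ, if_pos (le_of_lt hk)]
    have e1 : m + 1 - (k + 1) = m - k := by omega
    have e2 : m - k = (m - (k + 1)) + 1 := by omega
    have h3 : PiQ q k ≠ 0 := PiQ_ne hq k
    have h4 : PiQ q (m - (k+1)) ≠ 0 := PiQ_ne hq _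
    have h5 : q ^ (k+1) - 1 ≠ 0 := by
      have : 1 < q ^ (k+1) := one_lt_pow₀ hq (Nat.succ_ne_zero k)
      intro h; linarith
    have h6 : q ^ (m - (k+1) + 1) - 1 ≠ 0 := by
      have : 1 < q ^ (m - (k+1) + 1) := one_lt_pow₀ hq (Nat.succ_ne_zero _)
      intro h; linarith
    rw [e1, PiQ_succ m, e2, PiQ_succ (m - (k+1)), PiQ_succ k,
      show q ^ (m + 1) = q ^ (k+1) * q ^ (m - (k+1) + 1) by rw [← pow_add]; congr 1; omega]
    field_simp
    ring
  · -- k = m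
    subst hk
    rw [BQ_self hq, BQ, if_neg (by omega), BQ_self hq]
    ring
  · -- k > m
    rw [BQ, if_neg (by omega), BQ, if_neg (by omega), BQ, if_neg (by omega)]
    ring

/-- The key alternating-sum identity. -/
lemma qbinom_alt (hq : 1 < q) (m : ℕ) :
    ∑ k ∈ range (m + 1), (-1 : ℝ) ^ k * EQ q k * BQ q m k
      = if m = 0 then 1 else 0 := by
  rcases Nat.eq_zero_or_pos m with rfl | hm
  · simp [EQ_zero, BQ_zero_left hq]
  obtain ⟨m', rfl⟩ : ∃ m', m = m' + 1 := ⟨m - 1, by omega⟩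
  rw [if_neg (by omega)]
  set s : ℕ → ℝ := fun k => (-1 : ℝ) ^ k * EQ q k with hs
  set t : ℕ → ℝ := fun k => s k * q ^ k * BQ q m' k with ht
  have hs0 : s 0 = 1 := by simp [hs, EQ_zero]
  have hssucc : ∀ k, s (k + 1) = -(s k * q ^ k) := by
    intro k
    simp only [hs, pow_succ, EQ_succ]
    ring
  have hterm : ∀ k, s (k + 1) * BQ q (m' + 1) (k + 1) = t (k + 1) - t k := by
    intro k
    simp only [ht]
    rw [BQ_pascal hq, hssucc]
    ring
  have ht0 : t 0 = 1 := by
    simp only [ht, hs0, pow_zero, one_mul, mul_one]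
    exact BQ_zero_left hq m'
  have htm : t (m' + 1) = 0 := by
    simp only [ht]
    rw [BQ, if_neg (by omega), mul_zero]
  show ∑ k ∈ range (m' + 1 + 1), s k * BQ q (m' + 1) k = 0
  rw [Finset.sum_range_succ', Finset.sum_congr rfl (fun k _ => hterm k),
    Finset.sum_range_sub (f := t), ht0, htm, hs0, BQ_zero_left hq]
  ring
end QAlg


section Aux
variable (ℓ : ℕ) [Fact ℓ.Prime]

/-- `{M // IsUnit M.det} ≃ GL`. -/
noncomputable def glEquiv (n : ℕ) :
    {M : Matrix (Fin n) (Fin n) (ZMod ℓ) // IsUnit M.det} ≃ GL (Fin n) (ZMod ℓ) where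
  toFun M := Matrix.GeneralLinearGroup.mk'' M.1 M.2
  invFun u := ⟨u.1, by
    have := (Matrix.isUnit_iff_isUnit_det (u : Matrix (Fin n) (Fin n) (ZMod ℓ))).mp
      (Units.isUnit u)
    exact this⟩
  left_inv M := rfl
  right_inv u := Units.ext rfl

lemma cardGL_eq (n : ℕ) : cardGL ℓ n = ∏ i ∈ range n, (ℓ ^ n - ℓ ^ i) := by
  rw [cardGL, Nat.card_congr (glEquiv ℓ n), Matrix.card_GL_field]
  rw [ZMod.card]
  exact Fin.prod_univ_eq_prod_range (fun i => ℓ ^ n - ℓ ^ i) n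

/-- number of linearly independent `j`-tuples in an `e`-dimensional space. -/
def Inum (j e : ℕ) : ℕ := if j ≤ e then ∏ i ∈ range j, (ℓ ^ e - ℓ ^ i) else 0

lemma fiber_card {g j : ℕ} (M : Matrix (Fin g) (Fin g) (ZMod ℓ)) :
    Nat.card {v : Fin j → (Fin g → ZMod ℓ) //
        LinearIndependent (ZMod ℓ) v ∧ ∀ i, M.mulVec (v i) = v i}
      = Inum ℓ j (fixdim M) := by
  classical
  set K := LinearMap.ker (M - 1).mulVecLin with hK
  have hmem : ∀ x : Fin g → ZMod ℓ, x ∈ K ↔ M.mulVec x = x := by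
    intro x
    rw [hK, LinearMap.mem_ker, Matrix.mulVecLin_apply, Matrix.sub_mulVec, Matrix.one_mulVec,
      sub_eq_zero]
  have e : {v : Fin j → (Fin g → ZMod ℓ) //
        LinearIndependent (ZMod ℓ) v ∧ ∀ i, M.mulVec (v i) = v i}
      ≃ {w : Fin j → K // LinearIndependent (ZMod ℓ) w} := by
    refine ⟨fun v => ⟨fun i => ⟨v.1 i, (hmem _).mpr (v.2.2 i)⟩, ?_⟩,
      fun w => ⟨fun i => (w.1 i : Fin g → ZMod ℓ), ?_, fun i => (hmem _).mp (w.1 i).2⟩,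
      fun v => rfl, fun w => rfl⟩
    · have := v.2.1
      rw [← LinearMap.linearIndependent_iff (K.subtype) (Submodule.ker_subtype K)]
      exact this
    · exact (LinearMap.linearIndependent_iff (K.subtype) (Submodule.ker_subtype K)).mpr w.2
  rw [Nat.card_congr e]
  by_cases hj : j ≤ fixdim M
  · rw [Inum, if_pos hj]
    have := card_linearIndependent (K := ZMod ℓ) (V := K) (k := j) hj
    rw [this, ZMod.card]
    have hfd : Module.finrank (ZMod ℓ) K = fixdim M := rfl
    rw [hfd]
    exact Fin.prod_univ_eq_prod_range (fun i => ℓ ^ fixdim M - ℓ ^ i) j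
  · rw [Inum, if_neg hj]
    have : IsEmpty {w : Fin j → K // LinearIndependent (ZMod ℓ) w} := by
      constructor
      rintro ⟨w, hw⟩
      exact hj (by simpa using hw.fintype_card_le_finrank : j ≤ Module.finrank (ZMod ℓ) K)
    simp [Nat.card_of_isEmpty]
lemma exists_P {g j k : ℕ} (hg : 0 < g) (e : Fin j ⊕ Fin k ≃ Fin g)
    (v : Fin j → Fin g → ZMod ℓ) (hv : LinearIndependent (ZMod ℓ) v) :
    ∃ P : Matrix (Fin g) (Fin g) (ZMod ℓ), IsUnit P.det ∧
      ∀ i, P.mulVec (Pi.single (e (Sum.inl i)) 1) = v i := by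
  classical
  haveI hne : Nonempty (Fin j ⊕ Fin k) := ⟨e.symm ⟨0, hg⟩⟩
  have hjk : j + k = g := by simpa using (Fintype.card_congr e)
  obtain ⟨t, ht⟩ := Submodule.exists_isCompl (Submodule.span (ZMod ℓ) (Set.range v))
  have hdim : Module.finrank (ZMod ℓ) (Fin g → ZMod ℓ) = g := by
    simp [Module.finrank_fintype_fun_eq_card]
  have hs : Module.finrank (ZMod ℓ) (Submodule.span (ZMod ℓ) (Set.range v)) = j := by
    rw [finrank_span_eq_card hv]; simp
  have hsum := Submodule.finrank_add_eq_of_isCompl ht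
  have hkt : Module.finrank (ZMod ℓ) t = k := by omega
  let bt : Module.Basis (Fin k) (ZMod ℓ) t := (Module.finBasis (ZMod ℓ) t).reindex (finCongr hkt)
  let w : Fin j ⊕ Fin k → (Fin g → ZMod ℓ) := Sum.elim v (fun i => (bt i : Fin g → ZMod ℓ))
  have hw2 : LinearIndependent (ZMod ℓ) (fun i => (bt i : Fin g → ZMod ℓ)) :=
    (bt.linearIndependent).map' t.subtype (Submodule.ker_subtype t)
  have hspan2 : Submodule.span (ZMod ℓ) (Set.range fun i => (bt i : Fin g → ZMod ℓ)) = t := by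
    have : (Set.range fun i => (bt i : Fin g → ZMod ℓ)) = t.subtype '' (Set.range bt) := by
      rw [← Set.range_comp]; rfl
    rw [this, ← Submodule.map_span, bt.span_eq, Submodule.map_top, Submodule.range_subtype]
  have hw : LinearIndependent (ZMod ℓ) w := by
    refine LinearIndependent.sum_type hv hw2 ?_
    rw [hspan2]
    exact ht.disjoint
  have hcard : Fintype.card (Fin j ⊕ Fin k) = Module.finrank (ZMod ℓ) (Fin g → ZMod ℓ) := by
    simp [hdim, hjk]
  let b := basisOfLinearIndependentOfCardEqFinrank hw hcard
  let bG : Module.Basis (Fin g) (ZMod ℓ) (Fin g → ZMod ℓ) := b.reindex e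
  let f := (Pi.basisFun (ZMod ℓ) (Fin g)).equiv bG (Equiv.refl _)
  refine ⟨LinearMap.toMatrix' (f : (Fin g → ZMod ℓ) →ₗ[ZMod ℓ] (Fin g → ZMod ℓ)), ?_, ?_⟩
  · rw [LinearMap.det_toMatrix']
    exact f.isUnit_det'
  · intro i
    have h1 : (LinearMap.toMatrix' (f : (Fin g → ZMod ℓ) →ₗ[ZMod ℓ] (Fin g → ZMod ℓ))).mulVec
        (Pi.single (e (Sum.inl i)) 1) = f (Pi.single (e (Sum.inl i)) 1) := by
      rw [← Matrix.toLin'_apply, Matrix.toLin'_toMatrix']; rfl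
    rw [h1, ← Pi.basisFun_apply]
    have h2 := (Pi.basisFun (ZMod ℓ) (Fin g)).equiv_apply (e (Sum.inl i)) bG (Equiv.refl _)
    rw [h2]
    show bG (e (Sum.inl i)) = v i
    rw [Module.Basis.reindex_apply, Equiv.symm_apply_apply]
    show b (Sum.inl i) = v i
    rw [coe_basisOfLinearIndependentOfCardEqFinrank]
    rfl
/-- counting block matrices `[[1, B], [0, D]]` with `D` invertible. -/
lemma block_card {j k : ℕ} :
    Nat.card {N : Matrix (Fin j ⊕ Fin k) (Fin j ⊕ Fin k) (ZMod ℓ) //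
        IsUnit N.det ∧ ∀ (a : Fin j ⊕ Fin k) (i : Fin j),
          N a (Sum.inl i) = if a = Sum.inl i then 1 else 0}
      = ℓ ^ (j * k) * cardGL ℓ k := by
  classical
  have hblocks : ∀ N : Matrix (Fin j ⊕ Fin k) (Fin j ⊕ Fin k) (ZMod ℓ),
      (∀ (a : Fin j ⊕ Fin k) (i : Fin j), N a (Sum.inl i) = if a = Sum.inl i then 1 else 0) →
      N = fromBlocks 1 N.toBlocks₁₂ 0 N.toBlocks₂₂ := by
    intro N hN
    have h11 : N.toBlocks₁₁ = 1 := by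
      ext a i
      simp only [toBlocks₁₁, of_apply]
      rw [hN (Sum.inl a) i]
      simp [Matrix.one_apply, Sum.inl.injEq]
    have h21 : N.toBlocks₂₁ = 0 := by
      ext b i
      simp only [toBlocks₂₁, of_apply]
      rw [hN (Sum.inr b) i]
      simp
    conv_lhs => rw [← fromBlocks_toBlocks N, h11, h21]
  let E : {N : Matrix (Fin j ⊕ Fin k) (Fin j ⊕ Fin k) (ZMod ℓ) //
        IsUnit N.det ∧ ∀ (a : Fin j ⊕ Fin k) (i : Fin j),
          N a (Sum.inl i) = if a = Sum.inl i then 1 else 0}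
      ≃ Matrix (Fin j) (Fin k) (ZMod ℓ) × {D : Matrix (Fin k) (Fin k) (ZMod ℓ) // IsUnit D.det} :=
    { toFun := fun N => (N.1.toBlocks₁₂, ⟨N.1.toBlocks₂₂, by
        have h := N.2.1
        rw [hblocks N.1 N.2.2, Matrix.det_fromBlocks_zero₂₁, Matrix.det_one, one_mul] at h
        exact h⟩)
      invFun := fun BD => ⟨fromBlocks 1 BD.1 0 BD.2.1, by
        constructor
        · rw [Matrix.det_fromBlocks_zero₂₁, Matrix.det_one, one_mul]
          exact BD.2.2
        · rintro (a | b) i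
          · simp [Matrix.fromBlocks_apply₁₁, Matrix.one_apply, Sum.inl.injEq]
          · simp [Matrix.fromBlocks_apply₂₁]⟩
      left_inv := fun N => by
        apply Subtype.ext
        exact (hblocks N.1 N.2.2).symm
      right_inv := fun BD => by
        refine Prod.ext ?_ (Subtype.ext ?_)
        · ext a i; simp [toBlocks₁₂, Matrix.fromBlocks_apply₁₂]
        · ext a b; simp [toBlocks₂₂, Matrix.fromBlocks_apply₂₂] }
  rw [Nat.card_congr E, Nat.card_prod]
  congr 1
  · rw [Nat.card_eq_fintype_card]
    rw [Fintype.card_congr (Matrix.of : (Fin j → Fin k → ZMod ℓ) ≃ _).symm]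
    rw [Fintype.card_fun]
    rw [Fintype.card_fun, ZMod.card, Fintype.card_fin, Fintype.card_fin, ← pow_mul, mul_comm k j]

lemma stab_card {g j : ℕ} (hg : 0 < g) (hj : j ≤ g)
    (v : Fin j → Fin g → ZMod ℓ) (hv : LinearIndependent (ZMod ℓ) v) :
    Nat.card {M : Matrix (Fin g) (Fin g) (ZMod ℓ) //
        IsUnit M.det ∧ ∀ i, M.mulVec (v i) = v i}
      = ℓ ^ (j * (g - j)) * cardGL ℓ (g - j) := by
  classical
  set k := g - j with hk
  have hjk : j + k = g := by omega
  let e : Fin j ⊕ Fin k ≃ Fin g := finSumFinEquiv.trans (finCongr hjk)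
  obtain ⟨P, hPdet, hP⟩ := exists_P ℓ hg e v hv
  obtain ⟨U, hU⟩ := (Matrix.isUnit_iff_isUnit_det P).mpr hPdet
  have hcancel : ∀ x y : Fin g → ZMod ℓ,
      (↑U⁻¹ : Matrix (Fin g) (Fin g) (ZMod ℓ)).mulVec x
        = (↑U⁻¹ : Matrix (Fin g) (Fin g) (ZMod ℓ)).mulVec y ↔ x = y := by
    intro x y
    constructor
    · intro h
      have h2 := congrArg (fun z => (↑U : Matrix (Fin g) (Fin g) (ZMod ℓ)).mulVec z) h
      simpa only [Matrix.mulVec_mulVec, Units.mul_inv, Matrix.one_mulVec] using h2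
    · intro h; rw [h]
  have hUv : ∀ i, (↑U : Matrix (Fin g) (Fin g) (ZMod ℓ)).mulVec
      (Pi.single (e (Sum.inl i)) 1) = v i := by
    intro i; rw [hU]; exact hP i
  have hUiv : ∀ i, (↑U⁻¹ : Matrix (Fin g) (Fin g) (ZMod ℓ)).mulVec (v i)
      = Pi.single (e (Sum.inl i)) 1 := by
    intro i
    rw [← hUv i, Matrix.mulVec_mulVec, U.inv_mul, Matrix.one_mulVec]
  let φ : Matrix (Fin g) (Fin g) (ZMod ℓ) ≃ Matrix (Fin g) (Fin g) (ZMod ℓ) :=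
    ⟨fun M => (↑U⁻¹ : Matrix (Fin g) (Fin g) (ZMod ℓ)) * M * (↑U : Matrix (Fin g) (Fin g) (ZMod ℓ)),
     fun N => (↑U : Matrix (Fin g) (Fin g) (ZMod ℓ)) * N * (↑U⁻¹ : Matrix (Fin g) (Fin g) (ZMod ℓ)),
     fun M => by
       simp only [mul_assoc, Units.mul_inv, Units.inv_mul, Units.mul_inv_cancel_left,
         Units.inv_mul_cancel_left, mul_one, one_mul],
     fun N => by
       simp only [mul_assoc, Units.mul_inv, Units.inv_mul, Units.mul_inv_cancel_left,
         Units.inv_mul_cancel_left, mul_one, one_mul]⟩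
  have hφ : ∀ M : Matrix (Fin g) (Fin g) (ZMod ℓ),
      (IsUnit M.det ∧ ∀ i, M.mulVec (v i) = v i) ↔
      (IsUnit (φ M).det ∧ ∀ i, (φ M).mulVec (Pi.single (e (Sum.inl i)) 1)
          = Pi.single (e (Sum.inl i)) 1) := by
    intro M
    have hdet : IsUnit (φ M).det ↔ IsUnit M.det := by
      rw [← Matrix.isUnit_iff_isUnit_det, ← Matrix.isUnit_iff_isUnit_det]
      show IsUnit (U⁻¹.val * M * U.val) ↔ IsUnit M
      constructor
      · intro h
        have hM : M = U.val * (U⁻¹.val * M * U.val) * U⁻¹.val := by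
          simp only [mul_assoc, Units.mul_inv, Units.inv_mul, Units.mul_inv_cancel_left,
            Units.inv_mul_cancel_left, mul_one, one_mul]
        rw [hM]
        exact (U.isUnit.mul h).mul U⁻¹.isUnit
      · intro h
        exact (U⁻¹.isUnit.mul h).mul U.isUnit
    have hcond : (∀ i, (φ M).mulVec (Pi.single (e (Sum.inl i)) 1)
          = Pi.single (e (Sum.inl i)) 1) ↔ (∀ i, M.mulVec (v i) = v i) := by
      apply forall_congr'
      intro i
      show (U⁻¹.val * M * U.val : Matrix (Fin g) (Fin g) (ZMod ℓ)).mulVec _ = _ ↔ _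
      rw [← Matrix.mulVec_mulVec, ← Matrix.mulVec_mulVec, hUv i, ← hUiv i, hcancel]
    rw [hdet, hcond]
  rw [Nat.card_congr (Equiv.subtypeEquiv
    (p := fun M : Matrix (Fin g) (Fin g) (ZMod ℓ) =>
      IsUnit M.det ∧ ∀ i, M.mulVec (v i) = v i)
    (q := fun N : Matrix (Fin g) (Fin g) (ZMod ℓ) =>
      IsUnit N.det ∧ ∀ i, N.mulVec (Pi.single (e (Sum.inl i)) 1) = Pi.single (e (Sum.inl i)) 1)
    φ hφ)]
  -- reindex to block form
  let ψ : Matrix (Fin g) (Fin g) (ZMod ℓ) ≃ Matrix (Fin j ⊕ Fin k) (Fin j ⊕ Fin k) (ZMod ℓ) :=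
    (Matrix.reindex e.symm e.symm)
  have hψ : ∀ M : Matrix (Fin g) (Fin g) (ZMod ℓ),
      (IsUnit M.det ∧ ∀ i, M.mulVec (Pi.single (e (Sum.inl i)) 1)
          = Pi.single (e (Sum.inl i)) 1) ↔
      (IsUnit (ψ M).det ∧ ∀ (a : Fin j ⊕ Fin k) (i : Fin j),
          (ψ M) a (Sum.inl i) = if a = Sum.inl i then 1 else 0) := by
    intro M
    have hdet : (ψ M).det = M.det := Matrix.det_reindex_self e.symm M
    rw [hdet]
    have happ : ∀ a b, (ψ M) a b = M (e a) (e b) := by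
      intro a b
      simp [ψ, Matrix.reindex_apply, Matrix.submatrix_apply]
    constructor
    · rintro ⟨h1, h2⟩
      refine ⟨h1, fun a i => ?_⟩
      have := congrFun (h2 i) (e a)
      rw [Matrix.mulVec_single] at this
      simp only [MulOpposite.op_one, one_smul, Matrix.col_apply] at this
      rw [happ, this, Pi.single_apply]
      by_cases hai : a = Sum.inl i
      · simp [hai]
      · rw [if_neg ( fun h => hai (e.injective h)), if_neg hai]
    · rintro ⟨h1, h2⟩
      refine ⟨h1, fun i => ?_⟩
      funext r
      rw [Matrix.mulVec_single]
      show M r (e (Sum.inl i)) * 1 = _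
      rw [mul_one]
      have := h2 (e.symm r) i
      rw [happ] at this
      simp only [Equiv.apply_symm_apply] at this
      rw [this, Pi.single_apply]
      by_cases hr : e.symm r = Sum.inl i
      · have : r = e (Sum.inl i) := by rw [← hr, Equiv.apply_symm_apply]
        simp [hr, this]
      · rw [if_neg hr, if_neg (fun h => hr (by rw [h, Equiv.symm_apply_apply]))]
  rw [Nat.card_congr (Equiv.subtypeEquiv
    (p := fun M : Matrix (Fin g) (Fin g) (ZMod ℓ) =>
      IsUnit M.det ∧ ∀ i, M.mulVec (Pi.single (e (Sum.inl i)) 1) = Pi.single (e (Sum.inl i)) 1)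
    (q := fun N : Matrix (Fin j ⊕ Fin k) (Fin j ⊕ Fin k) (ZMod ℓ) =>
      IsUnit N.det ∧ ∀ (a : Fin j ⊕ Fin k) (i : Fin j),
        N a (Sum.inl i) = if a = Sum.inl i then 1 else 0)
    ψ hψ)]
  exact block_card ℓ
noncomputable def Fcnt (g d : ℕ) : ℕ :=
  Nat.card {M : Matrix (Fin g) (Fin g) (ZMod ℓ) // IsUnit M.det ∧ fixdim M = d}

lemma frames_stab (g j : ℕ) (hj : j ≤ g) :
    (∏ i ∈ range j, (ℓ ^ g - ℓ ^ i)) * (ℓ ^ (j * (g - j)) * cardGL ℓ (g - j))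
      = cardGL ℓ g := by
  rw [cardGL_eq, cardGL_eq]
  have hsplit : ∏ i ∈ range g, (ℓ ^ g - ℓ ^ i)
      = (∏ i ∈ range j, (ℓ ^ g - ℓ ^ i)) * ∏ i ∈ range (g - j), (ℓ ^ g - ℓ ^ (j + i)) := by
    rw [show range g = range (j + (g - j)) by rw [Nat.add_sub_cancel' hj],
      Finset.prod_range_add]
  rw [hsplit]
  congr 1
  have hfac : ∀ i, i < g - j → ℓ ^ g - ℓ ^ (j + i) = ℓ ^ j * (ℓ ^ (g - j) - ℓ ^ i) := by
    intro i hi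
    rw [Nat.mul_sub, ← pow_add, ← pow_add]
    congr 2 <;> omega
  rw [Finset.prod_congr rfl (fun i hi => hfac i (Finset.mem_range.mp hi))]
  rw [Finset.prod_mul_distrib, Finset.prod_const, Finset.card_range, ← pow_mul]

lemma claimA {g j : ℕ} (hg : 0 < g) (hj : j ≤ g) :
    ∑ d ∈ range (g + 1), Fcnt ℓ g d * Inum ℓ j d = cardGL ℓ g := by
  classical
  set T := {M : Matrix (Fin g) (Fin g) (ZMod ℓ) // IsUnit M.det} with hT
  set X := {p : Matrix (Fin g) (Fin g) (ZMod ℓ) × (Fin j → Fin g → ZMod ℓ) //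
      (IsUnit p.1.det ∧ LinearIndependent (ZMod ℓ) p.2) ∧ ∀ i, p.1.mulVec (p.2 i) = p.2 i}
    with hX
  -- way 1 : fiber over the matrix
  have way1 : Nat.card X = ∑ d ∈ range (g + 1), Fcnt ℓ g d * Inum ℓ j d := by
    have E : X ≃ Σ M : T, {v : Fin j → Fin g → ZMod ℓ //
        LinearIndependent (ZMod ℓ) v ∧ ∀ i, M.1.mulVec (v i) = v i} :=
      ⟨fun x => ⟨⟨x.1.1, x.2.1.1⟩, ⟨x.1.2, x.2.1.2, x.2.2⟩⟩,
       fun s => ⟨(s.1.1, s.2.1), ⟨⟨s.1.2, s.2.2.1⟩, s.2.2.2⟩⟩,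
       fun x => rfl, fun s => rfl⟩
    letI : Fintype T := Fintype.ofFinite T
    letI : ∀ M : T, Fintype {v : Fin j → Fin g → ZMod ℓ //
        LinearIndependent (ZMod ℓ) v ∧ ∀ i, M.1.mulVec (v i) = v i} :=
      fun M => Fintype.ofFinite _
    rw [Nat.card_congr E, Nat.card_eq_fintype_card, Fintype.card_sigma]
    have hterm : ∀ M : T, Fintype.card {v : Fin j → Fin g → ZMod ℓ //
        LinearIndependent (ZMod ℓ) v ∧ ∀ i, M.1.mulVec (v i) = v i}
        = Inum ℓ j (fixdim M.1) := by
      intro M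
      rw [← Nat.card_eq_fintype_card]
      exact fiber_card ℓ M.1
    rw [Finset.sum_congr rfl (fun M _ => hterm M)]
    have hmaps : ∀ M : T, M ∈ (univ : Finset T) → fixdim M.1 ∈ range (g + 1) := by
      intro M _
      rw [Finset.mem_range]
      have h1 : fixdim M.1 ≤ Module.finrank (ZMod ℓ) (Fin g → ZMod ℓ) :=
        Submodule.finrank_le _
      have h2 : Module.finrank (ZMod ℓ) (Fin g → ZMod ℓ) = g := by
        simp [Module.finrank_fintype_fun_eq_card]
      omega
    rw [← Finset.sum_fiberwise_of_maps_to hmaps (fun M => Inum ℓ j (fixdim M.1))]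
    apply Finset.sum_congr rfl
    intro d _
    have hconst : ∀ M ∈ univ.filter (fun M : T => fixdim M.1 = d),
        Inum ℓ j (fixdim M.1) = Inum ℓ j d := by
      intro M hM
      rw [(Finset.mem_filter.mp hM).2]
    rw [Finset.sum_congr rfl hconst, Finset.sum_const, smul_eq_mul]
    congr 1
    rw [← Fintype.card_subtype]
    rw [Fcnt, Nat.card_eq_fintype_card]
    exact Fintype.card_congr
      (Equiv.subtypeSubtypeEquivSubtypeInter
        (fun M : Matrix (Fin g) (Fin g) (ZMod ℓ) => IsUnit M.det)
        (fun M => fixdim M = d))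
  -- way 2 : fiber over the frame
  have way2 : Nat.card X = cardGL ℓ g := by
    have E : X ≃ Σ v : {v : Fin j → Fin g → ZMod ℓ // LinearIndependent (ZMod ℓ) v},
        {M : Matrix (Fin g) (Fin g) (ZMod ℓ) //
          IsUnit M.det ∧ ∀ i, M.mulVec (v.1 i) = v.1 i} :=
      ⟨fun x => ⟨⟨x.1.2, x.2.1.2⟩, ⟨x.1.1, x.2.1.1, x.2.2⟩⟩,
       fun s => ⟨(s.2.1, s.1.1), ⟨⟨s.2.2.1, s.1.2⟩, s.2.2.2⟩⟩,
       fun x => rfl, fun s => rfl⟩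
    letI : Fintype {v : Fin j → Fin g → ZMod ℓ // LinearIndependent (ZMod ℓ) v} :=
      Fintype.ofFinite _
    letI : ∀ v : {v : Fin j → Fin g → ZMod ℓ // LinearIndependent (ZMod ℓ) v},
        Fintype {M : Matrix (Fin g) (Fin g) (ZMod ℓ) //
          IsUnit M.det ∧ ∀ i, M.mulVec (v.1 i) = v.1 i} := fun v => Fintype.ofFinite _
    rw [Nat.card_congr E, Nat.card_eq_fintype_card, Fintype.card_sigma]
    have hterm : ∀ v : {v : Fin j → Fin g → ZMod ℓ // LinearIndependent (ZMod ℓ) v},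
        Fintype.card {M : Matrix (Fin g) (Fin g) (ZMod ℓ) //
          IsUnit M.det ∧ ∀ i, M.mulVec (v.1 i) = v.1 i}
        = ℓ ^ (j * (g - j)) * cardGL ℓ (g - j) := by
      intro v
      rw [← Nat.card_eq_fintype_card]
      exact stab_card ℓ hg hj v.1 v.2
    rw [Finset.sum_congr rfl (fun v _ => hterm v), Finset.sum_const, smul_eq_mul]
    have hframes : Fintype.card {v : Fin j → Fin g → ZMod ℓ // LinearIndependent (ZMod ℓ) v}
        = ∏ i ∈ range j, (ℓ ^ g - ℓ ^ i) := by
      rw [← Nat.card_eq_fintype_card]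
      have hj' : j ≤ Module.finrank (ZMod ℓ) (Fin g → ZMod ℓ) := by
        simp [Module.finrank_fintype_fun_eq_card]; omega
      rw [card_linearIndependent (K := ZMod ℓ) (V := Fin g → ZMod ℓ) hj', ZMod.card]
      have h2 : Module.finrank (ZMod ℓ) (Fin g → ZMod ℓ) = g := by
        simp [Module.finrank_fintype_fun_eq_card]
      rw [h2]
      exact Fin.prod_univ_eq_prod_range (fun i => ℓ ^ g - ℓ ^ i) j
    rw [Finset.card_univ, hframes]
    exact frames_stab ℓ g j hj
  rw [← way1, way2]
lemma hq1 : 1 < (ℓ : ℝ) := by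
  have := (Fact.out : ℓ.Prime).two_le
  exact_mod_cast Nat.lt_of_lt_of_le Nat.one_lt_two this

lemma prod_sub_cast {n c : ℕ} (h : ∀ i ∈ range n, ℓ ^ i ≤ ℓ ^ c) :
    ((∏ i ∈ range n, (ℓ ^ c - ℓ ^ i) : ℕ) : ℝ)
      = ∏ i ∈ range n, ((ℓ : ℝ) ^ c - (ℓ : ℝ) ^ i) := by
  rw [Nat.cast_prod]
  refine Finset.prod_congr rfl fun i hi => ?_
  rw [Nat.cast_sub (h i hi), Nat.cast_pow, Nat.cast_pow]

lemma prod_sub_split {n c : ℕ} (hnc : n ≤ c) :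
    ∏ i ∈ range n, ((ℓ : ℝ) ^ c - (ℓ : ℝ) ^ i)
      = EQ (ℓ : ℝ) n * ∏ i ∈ range n, ((ℓ : ℝ) ^ (c - i) - 1) := by
  rw [EQ, ← Finset.prod_mul_distrib]
  refine Finset.prod_congr rfl fun i hi => ?_
  have hic : i ≤ c := le_trans (le_of_lt (Finset.mem_range.mp hi)) hnc
  rw [mul_sub, mul_one, ← pow_add]
  congr 2
  omega

lemma prod_reflect_pi {n c : ℕ} (hnc : n ≤ c) :
    ∏ i ∈ range n, ((ℓ : ℝ) ^ (c - i) - 1)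
      = ∏ i ∈ range n, ((ℓ : ℝ) ^ ((c - n) + i + 1) - 1) := by
  rw [← Finset.prod_range_reflect (fun i => (ℓ : ℝ) ^ ((c - n) + i + 1) - 1) n]
  refine Finset.prod_congr rfl fun i hi => ?_
  have := Finset.mem_range.mp hi
  congr 2
  omega

lemma cardGL_R (n : ℕ) : (cardGL ℓ n : ℝ) = EQ (ℓ : ℝ) n * PiQ (ℓ : ℝ) n := by
  rw [cardGL_eq, prod_sub_cast ℓ (fun i hi =>
      Nat.pow_le_pow_right (Fact.out : ℓ.Prime).pos (le_of_lt (Finset.mem_range.mp hi))),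
    prod_sub_split ℓ le_rfl, prod_reflect_pi ℓ le_rfl]
  congr 1
  rw [PiQ]
  refine Finset.prod_congr rfl fun i hi => ?_
  congr 2
  omega

lemma In_R {j e : ℕ} (hj : j ≤ e) :
    (Inum ℓ j e : ℝ) * PiQ (ℓ : ℝ) (e - j) = EQ (ℓ : ℝ) j * PiQ (ℓ : ℝ) e := by
  rw [Inum, if_pos hj, prod_sub_cast ℓ (fun i hi =>
      Nat.pow_le_pow_right (Fact.out : ℓ.Prime).pos
        (le_trans (le_of_lt (Finset.mem_range.mp hi)) hj)),
    prod_sub_split ℓ hj, prod_reflect_pi ℓ hj]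
  rw [PiQ_split (show e - j ≤ e by omega), show e - (e - j) = j by omega]
  ring

lemma Inum_zero {j e : ℕ} (h : e < j) : Inum ℓ j e = 0 := by
  rw [Inum, if_neg (by omega)]

/-- the δ-inversion lemma -/
lemma delta_sum {g d e : ℕ} (hde : d ≤ e) (heg : e ≤ g) :
    ∑ k ∈ range (g - d + 1),
        (((-1 : ℝ) ^ k * EQ (ℓ : ℝ) k) /
          ((cardGL ℓ d : ℝ) * (ℓ : ℝ) ^ (d * k) * (cardGL ℓ k : ℝ)))
          * (Inum ℓ (d + k) e : ℝ)
      = if e = d then 1 else 0 := by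
  have hq := hq1 ℓ
  set q : ℝ := (ℓ : ℝ)
  set m := e - d with hm
  have hsub : range (m + 1) ⊆ range (g - d + 1) := by
    apply Finset.range_subset_range.mpr; omega
  rw [← Finset.sum_subset hsub (fun k hk hk' => by
    have : e < d + k := by
      have := Finset.mem_range.mp hk
      have h2 : ¬ k < m + 1 := fun hc => hk' (Finset.mem_range.mpr hc)
      omega
    rw [Inum_zero ℓ this, Nat.cast_zero, mul_zero])]
  have hterm : ∀ k, k ∈ range (m + 1) →
      (((-1 : ℝ) ^ k * EQ q k) / ((cardGL ℓ d : ℝ) * q ^ (d * k) * (cardGL ℓ k : ℝ)))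
          * (Inum ℓ (d + k) e : ℝ)
      = (PiQ q e / (PiQ q d * PiQ q m)) * ((-1 : ℝ) ^ k * EQ q k * BQ q m k) := by
    intro k hk
    have hkm : k ≤ m := Nat.lt_succ_iff.mp (Finset.mem_range.mp hk)
    have hIe : (Inum ℓ (d + k) e : ℝ) * PiQ q (m - k) = EQ q (d + k) * PiQ q e := by
      have h := In_R ℓ (show d + k ≤ e by omega)
      rwa [show e - (d + k) = m - k by omega] at h
    have hI : (Inum ℓ (d + k) e : ℝ) = EQ q (d + k) * PiQ q e / PiQ q (m - k) := by
      rw [eq_div_iff (PiQ_ne hq (m - k))]; exact hIe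
    rw [hI, BQ, if_pos hkm, cardGL_R, cardGL_R, EQ_add]
    have n1 := PiQ_ne hq d
    have n2 := PiQ_ne hq k
    have n3 := PiQ_ne hq m
    have n4 := PiQ_ne hq (m - k)
    have n5 : EQ q d ≠ 0 := (EQ_pos hq d).ne'
    have n6 : EQ q k ≠ 0 := (EQ_pos hq k).ne'
    have n7 : q ^ (d * k) ≠ 0 := pow_ne_zero _ (by linarith)
    rw [show (ℓ : ℝ) = q from rfl]
    field_simp
  rw [Finset.sum_congr rfl hterm, ← Finset.mul_sum, qbinom_alt hq m]
  by_cases hed : e = d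
  · have hm0 : m = 0 := by omega
    rw [if_pos hm0, if_pos hed, hm0, PiQ_zero, mul_one, hed, mul_one,
      div_self (PiQ_ne hq d)]
  · have hm0 : m ≠ 0 := by omega
    rw [if_neg hm0, if_neg hed, mul_zero]
end Aux

theorem stmt3 (ℓ : ℕ) (hℓ : ℓ.Prime) (g : ℕ) (hg : 1 ≤ g) (d : ℕ) (hd : d ≤ g) :
    PGL ℓ g d =
      (1 / (cardGL ℓ d : ℝ)) *
        ∑ j ∈ Finset.range (g - d + 1),
          ((-1 : ℝ) ^ j * (ℓ : ℝ) ^ ((j ^ 2 - j) / 2)) /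
            ((ℓ : ℝ) ^ (d * j) * (cardGL ℓ j : ℝ)) := by
  haveI : Fact ℓ.Prime := ⟨hℓ⟩
  have hq : 1 < (ℓ : ℝ) := hq1 ℓ
  have hg0 : 0 < g := hg
  have HA : ∀ j', j' ≤ g →
      ∑ e ∈ range (g + 1), (Fcnt ℓ g e : ℝ) * (Inum ℓ j' e : ℝ) = (cardGL ℓ g : ℝ) := by
    intro j' hj'
    exact_mod_cast congrArg (fun n : ℕ => (n : ℝ)) (claimA ℓ hg0 hj')
  have key : (Fcnt ℓ g d : ℝ) = (cardGL ℓ g : ℝ) *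
      ∑ k ∈ range (g - d + 1),
        (((-1 : ℝ) ^ k * EQ (ℓ : ℝ) k) /
          ((cardGL ℓ d : ℝ) * (ℓ : ℝ) ^ (d * k) * (cardGL ℓ k : ℝ))) := by
    have swap : ∑ k ∈ range (g - d + 1),
          (((-1 : ℝ) ^ k * EQ (ℓ : ℝ) k) /
            ((cardGL ℓ d : ℝ) * (ℓ : ℝ) ^ (d * k) * (cardGL ℓ k : ℝ))) * (cardGL ℓ g : ℝ)
        = ∑ e ∈ range (g + 1), (Fcnt ℓ g e : ℝ) *
            ∑ k ∈ range (g - d + 1),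
              (((-1 : ℝ) ^ k * EQ (ℓ : ℝ) k) /
                ((cardGL ℓ d : ℝ) * (ℓ : ℝ) ^ (d * k) * (cardGL ℓ k : ℝ)))
                * (Inum ℓ (d + k) e : ℝ) := by
      calc ∑ k ∈ range (g - d + 1),
            (((-1 : ℝ) ^ k * EQ (ℓ : ℝ) k) /
              ((cardGL ℓ d : ℝ) * (ℓ : ℝ) ^ (d * k) * (cardGL ℓ k : ℝ))) * (cardGL ℓ g : ℝ)
          = ∑ k ∈ range (g - d + 1), ∑ e ∈ range (g + 1),
              (Fcnt ℓ g e : ℝ) *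
              ((((-1 : ℝ) ^ k * EQ (ℓ : ℝ) k) /
                ((cardGL ℓ d : ℝ) * (ℓ : ℝ) ^ (d * k) * (cardGL ℓ k : ℝ)))
                * (Inum ℓ (d + k) e : ℝ)) := by
            refine Finset.sum_congr rfl fun k hk => ?_
            rw [← HA (d + k) (by have := Finset.mem_range.mp hk; omega), Finset.mul_sum]
            refine Finset.sum_congr rfl fun e he => ?_
            ring
        _ = ∑ e ∈ range (g + 1), ∑ k ∈ range (g - d + 1),
              (Fcnt ℓ g e : ℝ) *
              ((((-1 : ℝ) ^ k * EQ (ℓ : ℝ) k) /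
                ((cardGL ℓ d : ℝ) * (ℓ : ℝ) ^ (d * k) * (cardGL ℓ k : ℝ)))
                * (Inum ℓ (d + k) e : ℝ)) := Finset.sum_comm
        _ = _ := by
            refine Finset.sum_congr rfl fun e he => ?_
            rw [Finset.mul_sum]
    have hdelta : ∀ e ∈ range (g + 1),
        (∑ k ∈ range (g - d + 1),
          (((-1 : ℝ) ^ k * EQ (ℓ : ℝ) k) /
            ((cardGL ℓ d : ℝ) * (ℓ : ℝ) ^ (d * k) * (cardGL ℓ k : ℝ)))
            * (Inum ℓ (d + k) e : ℝ)) = if e = d then 1 else 0 := by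
      intro e he
      have heg : e ≤ g := Nat.lt_succ_iff.mp (Finset.mem_range.mp he)
      by_cases hde : d ≤ e
      · exact delta_sum ℓ hde heg
      · rw [if_neg (by omega)]
        apply Finset.sum_eq_zero
        intro k hk
        rw [Inum_zero ℓ (show e < d + k by omega), Nat.cast_zero, mul_zero]
    have last : ∑ e ∈ range (g + 1), (Fcnt ℓ g e : ℝ) * (if e = d then 1 else 0)
        = (Fcnt ℓ g d : ℝ) := by
      rw [Finset.sum_congr rfl (fun e _ => by rw [mul_ite, mul_one, mul_zero]),
        Finset.sum_ite_eq' (range (g + 1)) d (fun e => (Fcnt ℓ g e : ℝ)),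
        if_pos (Finset.mem_range.mpr (by omega))]
    refine Eq.symm ?_
    calc (cardGL ℓ g : ℝ) * ∑ k ∈ range (g - d + 1),
            (((-1 : ℝ) ^ k * EQ (ℓ : ℝ) k) /
              ((cardGL ℓ d : ℝ) * (ℓ : ℝ) ^ (d * k) * (cardGL ℓ k : ℝ)))
        = ∑ k ∈ range (g - d + 1),
            (((-1 : ℝ) ^ k * EQ (ℓ : ℝ) k) /
              ((cardGL ℓ d : ℝ) * (ℓ : ℝ) ^ (d * k) * (cardGL ℓ k : ℝ))) * (cardGL ℓ g : ℝ) := by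
          rw [mul_comm, Finset.sum_mul]
      _ = ∑ e ∈ range (g + 1), (Fcnt ℓ g e : ℝ) *
            ∑ k ∈ range (g - d + 1),
              (((-1 : ℝ) ^ k * EQ (ℓ : ℝ) k) /
                ((cardGL ℓ d : ℝ) * (ℓ : ℝ) ^ (d * k) * (cardGL ℓ k : ℝ)))
                * (Inum ℓ (d + k) e : ℝ) := swap
      _ = ∑ e ∈ range (g + 1), (Fcnt ℓ g e : ℝ) * (if e = d then 1 else 0) :=
          Finset.sum_congr rfl (fun e he => by rw [hdelta e he])
      _ = (Fcnt ℓ g d : ℝ) := last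
  have hCG : (cardGL ℓ g : ℝ) ≠ 0 := by
    have hpos : 0 < cardGL ℓ g := by
      unfold cardGL
      haveI : Nonempty {M : Matrix (Fin g) (Fin g) (ZMod ℓ) // IsUnit M.det} :=
        ⟨⟨1, by simp⟩⟩
      exact Nat.card_pos
    exact_mod_cast hpos.ne'
  have hPGL : PGL ℓ g d = (Fcnt ℓ g d : ℝ) / (cardGL ℓ g : ℝ) := rfl
  rw [hPGL, key, mul_comm, mul_div_assoc, div_self hCG, mul_one, Finset.mul_sum]
  refine Finset.sum_congr rfl fun k hk => ?_
  have hEQ : EQ (ℓ : ℝ) k = (ℓ : ℝ) ^ ((k ^ 2 - k) / 2) := by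
    rw [EQ, Finset.prod_pow_eq_pow_sum, Finset.sum_range_id]
    congr 1
    rw [Nat.mul_sub, mul_one, pow_two]
  rw [hEQ]
  ring
end

section
/- Let $q$ be a real number with $0 < q < 1$. Then both of the following series converge and: (i) $-\sum_{r=1}^\infty \frac{(-1)^r q^{r(r+1)/2}}{\prod_{j=1}^r (1 - q^j)} = 1 - \prod_{n=1}^\infty (1 - q^n)$; (ii) $-\sum_{r=1}^\infty \frac{(-1)^r q^{r^2}}{\prod_{j=1}^r (1 - q^{2j})} = 1 - \prod_{n=1}^\infty (1 - q^{2n-1}) = 1 - \prod_{n=1}^\infty (1 + q^n)^{-1}$. -/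
open Finset Filter Topology

noncomputable def qP (t : ℝ) (n : ℕ) : ℝ := ∏ j ∈ Finset.Icc 1 n, (1 - t ^ j)

def qE : ℕ → ℕ
  | 0 => 0
  | n + 1 => qE n + n

noncomputable def qA (t z : ℝ) (n : ℕ) : ℝ := z ^ n * t ^ qE n / qP t n

noncomputable def qF (t z : ℝ) : ℝ := ∑' n, qA t z n

lemma qE_succ (n : ℕ) : qE (n + 1) = qE n + n := rfl

lemma qE_two_mul (n : ℕ) : 2 * qE (n + 1) = (n + 1) * n := by
  induction n with
  | zero => rfl
  | succ m ih =>
      have h : (m + 2) * (m + 1) = (m + 1) * m + 2 * (m + 1) := by ring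
      rw [qE_succ]
      linarith [ih, h]

lemma qP_pos {t : ℝ} (ht0 : 0 < t) (ht1 : t < 1) (n : ℕ) : 0 < qP t n := by
  refine Finset.prod_pos fun j hj => ?_
  have hj1 : j ≠ 0 := by
    have := (Finset.mem_Icc.mp hj).1; omega
  have : t ^ j < 1 := pow_lt_one₀ ht0.le ht1 hj1
  linarith

lemma qP_succ (t : ℝ) (n : ℕ) : qP t (n + 1) = qP t n * (1 - t ^ (n + 1)) := by
  unfold qP
  rw [Finset.prod_Icc_succ_top (by omega : 1 ≤ n + 1)]

lemma qP_zero (t : ℝ) : qP t 0 = 1 := by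
  unfold qP
  rw [show Finset.Icc 1 0 = ∅ from Finset.Icc_eq_empty (by omega), Finset.prod_empty]

lemma qA_zero (t z : ℝ) : qA t z 0 = 1 := by
  simp [qA, qP_zero, qE]

lemma qP_ge {t : ℝ} (ht0 : 0 < t) (ht1 : t < 1) (n : ℕ) : (1 - t) ^ n ≤ qP t n := by
  have hconst : (1 - t : ℝ) ^ n = ∏ _j ∈ Finset.Icc 1 n, (1 - t) := by
    rw [Finset.prod_const, Nat.card_Icc]
    congr 1
  rw [hconst]
  refine Finset.prod_le_prod (fun j _ => by linarith) (fun j hj => ?_)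
  have hj1 : 1 ≤ j := (Finset.mem_Icc.mp hj).1
  have h2 : t ^ j ≤ t ^ 1 := pow_le_pow_of_le_one ht0.le ht1.le hj1
  simp only [pow_one] at h2
  linarith

lemma summable_qB {t : ℝ} (ht0 : 0 < t) (ht1 : t < 1) (r : ℝ) (hr : 0 < r) :
    Summable (fun n => r ^ n * t ^ qE n) := by
  apply summable_of_ratio_test_tendsto_lt_one (l := 0) zero_lt_one
  · filter_upwards with n
    positivity
  · have key : ∀ n : ℕ, ‖r ^ (n + 1) * t ^ qE (n + 1)‖ / ‖r ^ n * t ^ qE n‖ = r * t ^ n := by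
      intro n
      rw [Real.norm_eq_abs, Real.norm_eq_abs, abs_of_pos (by positivity), abs_of_pos (by positivity),
        qE_succ, pow_add, pow_succ]
      field_simp
      ring
    have h2 : Tendsto (fun n : ℕ => r * t ^ n) atTop (𝓝 0) := by
      simpa using (tendsto_pow_atTop_nhds_zero_of_lt_one ht0.le ht1).const_mul r
    exact h2.congr (fun n => (key n).symm)

lemma qA_summable {t : ℝ} (ht0 : 0 < t) (ht1 : t < 1) (z : ℝ) : Summable (qA t z) := by
  have h1t : (0:ℝ) < 1 - t := by linarith
  have hb := summable_qB ht0 ht1 ((|z| + 1) / (1 - t)) (by positivity)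
  refine Summable.of_abs (Summable.of_nonneg_of_le (fun n => abs_nonneg _) (fun n => ?_) hb)
  rw [qA, abs_div, abs_mul, abs_pow, abs_pow, abs_of_pos (qP_pos ht0 ht1 n), abs_of_pos ht0,
    div_le_iff₀ (qP_pos ht0 ht1 n)]
  calc |z| ^ n * t ^ qE n ≤ (|z| + 1) ^ n * t ^ qE n :=
        mul_le_mul_of_nonneg_right (pow_le_pow_left₀ (abs_nonneg z) (by linarith) n)
          (by positivity)
    _ = ((|z| + 1) / (1 - t)) ^ n * t ^ qE n * (1 - t) ^ n := by
        rw [div_pow]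
        field_simp
    _ ≤ ((|z| + 1) / (1 - t)) ^ n * t ^ qE n * qP t n :=
        mul_le_mul_of_nonneg_left (qP_ge ht0 ht1 n) (by positivity)

lemma qF_funEq {t : ℝ} (ht0 : 0 < t) (ht1 : t < 1) (z : ℝ) :
    qF t z = (1 + z) * qF t (t * z) := by
  have h1 := qA_summable ht0 ht1 z
  have h2 := qA_summable ht0 ht1 (t * z)
  have hdiff : Summable (fun n => qA t z n - qA t (t * z) n) := h1.sub h2
  have h0 : qA t z 0 - qA t (t * z) 0 = 0 := by rw [qA_zero, qA_zero]; ring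
  have hstep : ∀ n, qA t z (n + 1) - qA t (t * z) (n + 1) = z * qA t (t * z) n := by
    intro n
    have hP : qP t n ≠ 0 := (qP_pos ht0 ht1 n).ne'
    have hlt : t ^ (n + 1) < 1 := pow_lt_one₀ ht0.le ht1 (by omega)
    have hQ : (1 : ℝ) - t ^ (n + 1) ≠ 0 := by
      intro h; rw [sub_eq_zero] at h; linarith
    have e3 : z * qA t (t * z) n = z ^ (n + 1) * t ^ (qE n + n) / qP t n := by
      rw [qA, mul_pow, pow_add, pow_succ]
      ring
    have e12 : qA t z (n + 1) - qA t (t * z) (n + 1) =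
        (z ^ (n + 1) * t ^ (qE n + n) * (1 - t ^ (n + 1))) / (qP t n * (1 - t ^ (n + 1))) := by
      simp only [qA, qP_succ, qE_succ, mul_pow]
      ring
    rw [e12, e3, div_eq_div_iff (mul_ne_zero hP hQ) hP]
    ring
  have hshift : Summable (fun n => qA t z (n + 1) - qA t (t * z) (n + 1)) :=
    (summable_nat_add_iff (f := fun n => qA t z n - qA t (t * z) n) 1).2 hdiff
  have e1 : qF t z - qF t (t * z) = z * qF t (t * z) := by
    calc qF t z - qF t (t * z) = ∑' n, (qA t z n - qA t (t * z) n) := (Summable.tsum_sub h1 h2).symm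
      _ = (qA t z 0 - qA t (t * z) 0) + ∑' n, (qA t z (n + 1) - qA t (t * z) (n + 1)) :=
          tsum_eq_zero_add' hshift
      _ = ∑' n, z * qA t (t * z) n := by
          rw [h0, zero_add]; exact tsum_congr hstep
      _ = z * qF t (t * z) := by rw [tsum_mul_left]; rfl
  linear_combination e1

lemma qF_prod {t : ℝ} (ht0 : 0 < t) (ht1 : t < 1) (z : ℝ) (N : ℕ) :
    qF t z = (∏ j ∈ Finset.range N, (1 + z * t ^ j)) * qF t (t ^ N * z) := by
  induction N with
  | zero => simp
  | succ n ih =>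
      rw [Finset.prod_range_succ, ih, qF_funEq ht0 ht1 (t ^ n * z),
        show t * (t ^ n * z) = t ^ (n + 1) * z by ring]
      ring

lemma qF_tendsto_one {t : ℝ} (ht0 : 0 < t) (ht1 : t < 1) {z : ℝ} (hz : |z| ≤ 1) :
    Tendsto (fun N : ℕ => qF t (t ^ N * z)) atTop (𝓝 1) := by
  have hCsum : Summable (fun n => t ^ qE (n + 1) / qP t (n + 1)) := by
    have h := (summable_nat_add_iff (f := qA t 1) 1).2 (qA_summable ht0 ht1 1)
    refine h.congr (fun n => ?_)
    simp [qA]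
  set C : ℝ := ∑' n, t ^ qE (n + 1) / qP t (n + 1) with hC
  have hC0 : 0 ≤ C :=
    tsum_nonneg (fun n => div_nonneg (by positivity) (qP_pos ht0 ht1 _).le)
  have key : ∀ w : ℝ, |w| ≤ 1 → |qF t w - 1| ≤ |w| * C := by
    intro w hw
    have hsw := qA_summable ht0 ht1 w
    have hshift : Summable fun n => qA t w (n + 1) :=
      (summable_nat_add_iff (f := qA t w) 1).2 hsw
    have habs : Summable fun n => |qA t w (n + 1)| := hshift.abs
    have e : qF t w - 1 = ∑' n, qA t w (n + 1) := by
      rw [qF, tsum_eq_zero_add' hshift, qA_zero]; ring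
    rw [e]
    have hpt : ∀ n : ℕ, |qA t w (n + 1)| ≤ |w| * (t ^ qE (n + 1) / qP t (n + 1)) := by
      intro n
      rw [qA, abs_div, abs_mul, abs_pow, abs_pow, abs_of_pos ht0,
        abs_of_pos (qP_pos ht0 ht1 _), mul_div_assoc]
      have h1 : |w| ^ (n + 1) ≤ |w| := pow_le_of_le_one (abs_nonneg w) hw (Nat.succ_ne_zero n)
      have h2 : (0:ℝ) ≤ t ^ qE (n + 1) / qP t (n + 1) :=
        div_nonneg (by positivity) (qP_pos ht0 ht1 _).le
      exact mul_le_mul_of_nonneg_right h1 h2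
    have hb : Summable fun n => |w| * (t ^ qE (n + 1) / qP t (n + 1)) := hCsum.mul_left _
    have c1 : |∑' n, qA t w (n + 1)| ≤ ∑' n, |qA t w (n + 1)| := by
      have := norm_tsum_le_tsum_norm (f := fun n => qA t w (n + 1))
        (by simpa [Real.norm_eq_abs] using habs)
      simpa [Real.norm_eq_abs] using this
    have c2 : ∑' n, |qA t w (n + 1)| ≤ ∑' n, |w| * (t ^ qE (n + 1) / qP t (n + 1)) :=
      Summable.tsum_le_tsum hpt habs hb
    have c3 : ∑' n, |w| * (t ^ qE (n + 1) / qP t (n + 1)) = |w| * C := by rw [tsum_mul_left]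
    linarith
  have h1 : Tendsto (fun N : ℕ => qF t (t ^ N * z) - 1) atTop (𝓝 0) := by
    apply squeeze_zero_norm (a := fun N : ℕ => t ^ N * C)
    · intro N
      have hwz : |t ^ N * z| ≤ 1 := by
        rw [abs_mul, abs_pow, abs_of_pos ht0]
        calc t ^ N * |z| ≤ 1 * 1 := by
              gcongr
              · exact pow_le_one₀ ht0.le ht1.le
        _ = 1 := by norm_num
      calc ‖qF t (t ^ N * z) - 1‖ ≤ |t ^ N * z| * C := key _ hwz
        _ = t ^ N * (|z| * C) := by rw [abs_mul, abs_pow, abs_of_pos ht0]; ring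
        _ ≤ t ^ N * (1 * C) := by gcongr
        _ = t ^ N * C := by ring
    · simpa using (tendsto_pow_atTop_nhds_zero_of_lt_one ht0.le ht1).mul_const C
  have := h1.add (tendsto_const_nhds (x := (1:ℝ)))
  simpa using this

lemma summable_log {f : ℕ → ℝ} {m : ℝ} (hm : 0 < m) (hf : ∀ n, m ≤ f n)
    (h : Summable fun n => |f n - 1|) : Summable fun n => Real.log (f n) := by
  set c := max m⁻¹ 1 with hc
  have hc1 : (1:ℝ) ≤ c := le_max_right _ _
  have hcm : m⁻¹ ≤ c := le_max_left _ _
  refine Summable.of_abs (Summable.of_nonneg_of_le (fun n => abs_nonneg _)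
    (fun n => ?_) (h.mul_left c))
  have hfn : 0 < f n := lt_of_lt_of_le hm (hf n)
  rcases le_or_gt 1 (f n) with h1 | h1
  · have hl : Real.log (f n) ≤ f n - 1 := Real.log_le_sub_one_of_pos hfn
    have hl0 : 0 ≤ Real.log (f n) := Real.log_nonneg h1
    rw [abs_of_nonneg hl0, abs_of_nonneg (by linarith)]
    nlinarith
  · have hinv : Real.log (f n)⁻¹ ≤ (f n)⁻¹ - 1 := Real.log_le_sub_one_of_pos (by positivity)
    rw [Real.log_inv] at hinv
    have hl0 : Real.log (f n) ≤ 0 := Real.log_nonpos hfn.le h1.le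
    rw [abs_of_nonpos hl0, abs_of_nonpos (by linarith)]
    have hle : (f n)⁻¹ ≤ m⁻¹ := by
      apply inv_anti₀ hm (hf n)
    have hfm : m ≤ f n := hf n
    have h2 : (f n)⁻¹ - 1 ≤ m⁻¹ * (1 - f n) := by
      have hprod : (f n)⁻¹ * f n = 1 := inv_mul_cancel₀ hfn.ne'
      have hm1 : (0:ℝ) < m⁻¹ := by positivity
      nlinarith [hle, hfn, h1]
    nlinarith [hinv, h2, hcm, h1, hm]

lemma multipliable_of {f : ℕ → ℝ} {m : ℝ} (hm : 0 < m) (hf : ∀ n, m ≤ f n)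
    (h : Summable fun n => |f n - 1|) : Multipliable f :=
  Real.multipliable_of_summable_log
    (fun n => lt_of_lt_of_le hm (hf n)) (summable_log hm hf h)

lemma tprod_pos_of {f : ℕ → ℝ} {m : ℝ} (hm : 0 < m) (hf : ∀ n, m ≤ f n)
    (h : Summable fun n => |f n - 1|) : 0 < ∏' n, f n := by
  have hcong := Real.rexp_tsum_eq_tprod
    (fun n => lt_of_lt_of_le hm (hf n)) (summable_log hm hf h)
  rw [← hcong]
  exact Real.exp_pos _

lemma qF_eq_tprod {t : ℝ} (ht0 : 0 < t) (ht1 : t < 1) {z : ℝ} (hz : |z| < 1) :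
    qF t z = ∏' n, (1 + z * t ^ n) := by
  have hpos : ∀ n, (1 - |z|) ≤ 1 + z * t ^ n := by
    intro n
    have h1 : |z * t ^ n| ≤ |z| := by
      rw [abs_mul, abs_pow, abs_of_pos ht0]
      calc |z| * t ^ n ≤ |z| * 1 := by
            gcongr
            exact pow_le_one₀ ht0.le ht1.le
        _ = |z| := by ring
    have := neg_abs_le (z * t ^ n)
    linarith
  have habs : Summable fun n => |(1 + z * t ^ n) - 1| := by
    have hs : Summable fun n : ℕ => |z| * t ^ n :=
      (summable_geometric_of_lt_one ht0.le ht1).mul_left |z|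
    refine hs.congr (fun n => ?_)
    rw [add_sub_cancel_left, abs_mul, abs_pow, abs_of_pos ht0]
  have hmult : Multipliable (fun n => 1 + z * t ^ n) :=
    multipliable_of (by linarith [abs_nonneg z]) hpos habs
  have hlim1 := hmult.hasProd.tendsto_prod_nat
  have hlim2 := qF_tendsto_one ht0 ht1 hz.le
  have hmul : Tendsto (fun N : ℕ => (∏ j ∈ Finset.range N, (1 + z * t ^ j)) * qF t (t ^ N * z))
      atTop (𝓝 ((∏' n, (1 + z * t ^ n)) * 1)) := hlim1.mul hlim2
  have heq : (fun N : ℕ => (∏ j ∈ Finset.range N, (1 + z * t ^ j)) * qF t (t ^ N * z)) =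
      fun _ => qF t z := funext fun N => (qF_prod ht0 ht1 z N).symm
  rw [heq] at hmul
  have := tendsto_nhds_unique tendsto_const_nhds hmul
  simpa using this

theorem stmt12 (q : ℝ) (h0 : 0 < q) (h1 : q < 1) :
    (Summable fun r : ℕ =>
      ((-1 : ℝ) ^ (r + 1) * q ^ ((r + 1) * (r + 2) / 2)) /
        ∏ j ∈ Finset.Icc 1 (r + 1), (1 - q ^ j)) ∧
    (Summable fun r : ℕ =>
      ((-1 : ℝ) ^ (r + 1) * q ^ ((r + 1) ^ 2)) /
        ∏ j ∈ Finset.Icc 1 (r + 1), (1 - q ^ (2 * j))) ∧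
    (-(∑' r : ℕ,
        ((-1 : ℝ) ^ (r + 1) * q ^ ((r + 1) * (r + 2) / 2)) /
          ∏ j ∈ Finset.Icc 1 (r + 1), (1 - q ^ j)) =
      1 - ∏' n : ℕ, (1 - q ^ (n + 1))) ∧
    (-(∑' r : ℕ,
        ((-1 : ℝ) ^ (r + 1) * q ^ ((r + 1) ^ 2)) /
          ∏ j ∈ Finset.Icc 1 (r + 1), (1 - q ^ (2 * j))) =
      1 - ∏' n : ℕ, (1 - q ^ (2 * (n + 1) - 1))) ∧
    (1 - ∏' n : ℕ, (1 - q ^ (2 * (n + 1) - 1)) = 1 - ∏' n : ℕ, (1 + q ^ (n + 1))⁻¹) := by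
  have hq2 : (0:ℝ) < q ^ 2 := by positivity
  have hq21 : q ^ 2 < 1 := by nlinarith
  have habsq : |(-q : ℝ)| < 1 := by rw [abs_neg, abs_of_pos h0]; exact h1
  -- exponent identities
  have hexp1 : ∀ r : ℕ, (r + 1) * (r + 2) / 2 = (r + 1) + qE (r + 1) := by
    intro r
    have h2 := qE_two_mul r
    have key : (r + 1) * (r + 2) = ((r + 1) + qE (r + 1)) * 2 := by
      calc (r + 1) * (r + 2) = (r + 1) * r + 2 * (r + 1) := by ring
        _ = 2 * qE (r + 1) + 2 * (r + 1) := by rw [h2]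
        _ = ((r + 1) + qE (r + 1)) * 2 := by ring
    exact Nat.div_eq_of_eq_mul_left (by norm_num) key
  have hexp2 : ∀ r : ℕ, (r + 1) ^ 2 = (r + 1) + 2 * qE (r + 1) := by
    intro r
    have h2 := qE_two_mul r
    calc (r + 1) ^ 2 = (r + 1) + (r + 1) * r := by ring
      _ = (r + 1) + 2 * qE (r + 1) := by rw [h2]
  -- term identifications
  have hterm1 : ∀ r : ℕ, ((-1 : ℝ)) ^ (r + 1) * q ^ ((r + 1) * (r + 2) / 2) /
      ∏ j ∈ Finset.Icc 1 (r + 1), (1 - q ^ j) = qA q (-q) (r + 1) := by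
    intro r
    rw [qA, hexp1 r, pow_add, neg_pow]
    rw [show qP q (r + 1) = ∏ j ∈ Finset.Icc 1 (r + 1), (1 - q ^ j) from rfl]
    ring
  have hterm2 : ∀ r : ℕ, ((-1 : ℝ)) ^ (r + 1) * q ^ ((r + 1) ^ 2) /
      ∏ j ∈ Finset.Icc 1 (r + 1), (1 - q ^ (2 * j)) = qA (q ^ 2) (-q) (r + 1) := by
    intro r
    have hden : qP (q ^ 2) (r + 1) = ∏ j ∈ Finset.Icc 1 (r + 1), (1 - q ^ (2 * j)) := by
      unfold qP
      exact Finset.prod_congr rfl (fun j _ => by rw [← pow_mul])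
    rw [qA, hden, hexp2 r, pow_add q (r + 1) (2 * qE (r + 1)), pow_mul q 2 (qE (r + 1)),
      neg_pow q (r + 1)]
    ring
  -- summability
  have hsum1 : Summable (fun r => qA q (-q) (r + 1)) :=
    (summable_nat_add_iff (f := qA q (-q)) 1).2 (qA_summable h0 h1 (-q))
  have hsum2 : Summable (fun r => qA (q ^ 2) (-q) (r + 1)) :=
    (summable_nat_add_iff (f := qA (q ^ 2) (-q)) 1).2 (qA_summable hq2 hq21 (-q))
  have hS1 : Summable (fun r : ℕ => ((-1 : ℝ)) ^ (r + 1) * q ^ ((r + 1) * (r + 2) / 2) /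
      ∏ j ∈ Finset.Icc 1 (r + 1), (1 - q ^ j)) := hsum1.congr (fun r => (hterm1 r).symm)
  have hS2 : Summable (fun r : ℕ => ((-1 : ℝ)) ^ (r + 1) * q ^ ((r + 1) ^ 2) /
      ∏ j ∈ Finset.Icc 1 (r + 1), (1 - q ^ (2 * j))) := hsum2.congr (fun r => (hterm2 r).symm)
  -- product identifications
  have hF1 : qF q (-q) = ∏' n : ℕ, (1 - q ^ (n + 1)) := by
    rw [qF_eq_tprod h0 h1 habsq]
    exact tprod_congr (fun n => by rw [pow_succ]; ring)
  have hF2 : qF (q ^ 2) (-q) = ∏' n : ℕ, (1 - q ^ (2 * (n + 1) - 1)) := by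
    rw [qF_eq_tprod hq2 hq21 habsq]
    refine tprod_congr (fun n => ?_)
    rw [show 2 * (n + 1) - 1 = 2 * n + 1 from by omega, pow_succ q (2 * n), pow_mul q 2 n]
    ring
  -- sum values
  have hval1 : ∑' r : ℕ, ((-1 : ℝ)) ^ (r + 1) * q ^ ((r + 1) * (r + 2) / 2) /
      ∏ j ∈ Finset.Icc 1 (r + 1), (1 - q ^ j) = qF q (-q) - 1 := by
    have h01 : qF q (-q) = 1 + ∑' r : ℕ, qA q (-q) (r + 1) := by
      rw [qF, tsum_eq_zero_add' hsum1, qA_zero]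
    rw [tsum_congr hterm1]
    linarith
  have hval2 : ∑' r : ℕ, ((-1 : ℝ)) ^ (r + 1) * q ^ ((r + 1) ^ 2) /
      ∏ j ∈ Finset.Icc 1 (r + 1), (1 - q ^ (2 * j)) = qF (q ^ 2) (-q) - 1 := by
    have h02 : qF (q ^ 2) (-q) = 1 + ∑' r : ℕ, qA (q ^ 2) (-q) (r + 1) := by
      rw [qF, tsum_eq_zero_add' hsum2, qA_zero]
    rw [tsum_congr hterm2]
    linarith
  -- part (v)
  have h1q : (0:ℝ) < 1 - q := by linarith
  have hgeo : Summable (fun n : ℕ => q ^ (n + 1)) := by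
    have := (summable_geometric_of_lt_one h0.le h1).mul_left q
    exact this.congr (fun n => by rw [pow_succ]; ring)
  have hqle : ∀ n : ℕ, q ^ (n + 1) ≤ q := fun n =>
    pow_le_of_le_one h0.le h1.le (Nat.succ_ne_zero n)
  -- A n = 1 - q^(n+1)
  have hApos : ∀ n : ℕ, 1 - q ≤ 1 - q ^ (n + 1) := fun n => by linarith [hqle n]
  have hAsum : Summable (fun n : ℕ => |(1 - q ^ (n + 1)) - 1|) := by
    refine hgeo.congr (fun n => ?_)
    rw [show (1 - q ^ (n + 1)) - 1 = -(q ^ (n + 1)) from by ring, abs_neg,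
      abs_of_pos (by positivity)]
  have hAmul : Multipliable (fun n : ℕ => 1 - q ^ (n + 1)) := multipliable_of h1q hApos hAsum
  -- B n = 1 + q^(n+1)
  have hBpos : ∀ n : ℕ, 1 - q ≤ 1 + q ^ (n + 1) := fun n => by
    have : (0:ℝ) ≤ q ^ (n + 1) := by positivity
    linarith
  have hBsum : Summable (fun n : ℕ => |(1 + q ^ (n + 1)) - 1|) := by
    refine hgeo.congr (fun n => ?_)
    rw [show (1 + q ^ (n + 1)) - 1 = q ^ (n + 1) from by ring, abs_of_pos (by positivity)]
  have hBmul : Multipliable (fun n : ℕ => 1 + q ^ (n + 1)) := multipliable_of h1q hBpos hBsum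
  have hBposv : 0 < ∏' n : ℕ, (1 + q ^ (n + 1)) := tprod_pos_of h1q hBpos hBsum
  -- Codd n = 1 - q^(2n+1)
  have hCpos : ∀ n : ℕ, 1 - q ≤ 1 - q ^ (2 * n + 1) := fun n => by
    have : q ^ (2 * n + 1) ≤ q := pow_le_of_le_one h0.le h1.le (by omega)
    linarith
  have hCsum : Summable (fun n : ℕ => |(1 - q ^ (2 * n + 1)) - 1|) := by
    refine Summable.of_nonneg_of_le (fun n => abs_nonneg _) (fun n => ?_) hgeo
    rw [show (1 - q ^ (2 * n + 1)) - 1 = -(q ^ (2 * n + 1)) from by ring, abs_neg,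
      abs_of_pos (by positivity)]
    exact pow_le_pow_of_le_one h0.le h1.le (by omega)
  have hCmul : Multipliable (fun n : ℕ => 1 - q ^ (2 * n + 1)) := multipliable_of h1q hCpos hCsum
  -- D n = 1 - q^(2n+1+1)
  have hDpos : ∀ n : ℕ, 1 - q ≤ 1 - q ^ (2 * n + 1 + 1) := fun n => by
    have : q ^ (2 * n + 1 + 1) ≤ q := pow_le_of_le_one h0.le h1.le (by omega)
    linarith
  have hDsum : Summable (fun n : ℕ => |(1 - q ^ (2 * n + 1 + 1)) - 1|) := by
    refine Summable.of_nonneg_of_le (fun n => abs_nonneg _) (fun n => ?_) hgeo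
    rw [show (1 - q ^ (2 * n + 1 + 1)) - 1 = -(q ^ (2 * n + 1 + 1)) from by ring, abs_neg,
      abs_of_pos (by positivity)]
    exact pow_le_pow_of_le_one h0.le h1.le (by omega)
  have hDmul : Multipliable (fun n : ℕ => 1 - q ^ (2 * n + 1 + 1)) :=
    multipliable_of h1q hDpos hDsum
  have hDposv : 0 < ∏' n : ℕ, (1 - q ^ (2 * n + 1 + 1)) := tprod_pos_of h1q hDpos hDsum
  -- split of A into even/odd
  have hsplit : (∏' n : ℕ, (1 - q ^ (2 * n + 1))) * (∏' n : ℕ, (1 - q ^ (2 * n + 1 + 1))) =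
      ∏' n : ℕ, (1 - q ^ (n + 1)) :=
    tprod_even_mul_odd (f := fun n : ℕ => 1 - q ^ (n + 1)) hCmul hDmul
  -- pairing
  have hpair : (∏' n : ℕ, (1 + q ^ (n + 1))) * (∏' n : ℕ, (1 - q ^ (n + 1))) =
      ∏' n : ℕ, (1 - q ^ (2 * n + 1 + 1)) := by
    rw [← Multipliable.tprod_mul hBmul hAmul]
    exact tprod_congr (fun n => by ring)
  have hkey : (∏' n : ℕ, (1 - q ^ (2 * n + 1))) * (∏' n : ℕ, (1 + q ^ (n + 1))) = 1 := by
    have h := hpair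
    rw [← hsplit] at h
    have hD0 : (∏' n : ℕ, (1 - q ^ (2 * n + 1 + 1))) ≠ 0 := ne_of_gt hDposv
    have h' : ((∏' n : ℕ, (1 - q ^ (2 * n + 1))) * (∏' n : ℕ, (1 + q ^ (n + 1)))) *
        (∏' n : ℕ, (1 - q ^ (2 * n + 1 + 1))) = 1 * (∏' n : ℕ, (1 - q ^ (2 * n + 1 + 1))) := by
      linear_combination h
    exact mul_right_cancel₀ hD0 h'
  have hCodd_eq : (∏' n : ℕ, (1 - q ^ (2 * n + 1))) = (∏' n : ℕ, (1 + q ^ (n + 1)))⁻¹ :=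
    eq_inv_of_mul_eq_one_left hkey
  -- E n = (1 + q^(n+1))⁻¹
  have hEpos : ∀ n : ℕ, (1:ℝ) / 2 ≤ (1 + q ^ (n + 1))⁻¹ := fun n => by
    have hx : q ^ (n + 1) ≤ q := hqle n
    have h2 : (1:ℝ) + q ^ (n + 1) ≤ 2 := by linarith
    have := inv_anti₀ (by positivity : (0:ℝ) < 1 + q ^ (n + 1)) h2
    calc (1:ℝ) / 2 = 2⁻¹ := by norm_num
      _ ≤ (1 + q ^ (n + 1))⁻¹ := this
  have hEsum : Summable (fun n : ℕ => |(1 + q ^ (n + 1))⁻¹ - 1|) := by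
    refine Summable.of_nonneg_of_le (fun n => abs_nonneg _) (fun n => ?_) hgeo
    have hx : (0:ℝ) < q ^ (n + 1) := by positivity
    have hx1 : (0:ℝ) < 1 + q ^ (n + 1) := by linarith
    have he : (1 + q ^ (n + 1))⁻¹ - 1 = -(q ^ (n + 1) / (1 + q ^ (n + 1))) := by
      field_simp
      ring
    rw [he, abs_neg, abs_of_nonneg (by positivity), div_le_iff₀ hx1]
    nlinarith
  have hEmul : Multipliable (fun n : ℕ => (1 + q ^ (n + 1))⁻¹) :=
    multipliable_of (by norm_num) hEpos hEsum
  have hPE : (∏' n : ℕ, (1 + q ^ (n + 1))⁻¹) = (∏' n : ℕ, (1 + q ^ (n + 1)))⁻¹ := by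
    have t1 := hEmul.hasProd.tendsto_prod_nat
    have t2 : Tendsto (fun N : ℕ => ∏ j ∈ Finset.range N, (1 + q ^ (j + 1))⁻¹) atTop
        (𝓝 (∏' n : ℕ, (1 + q ^ (n + 1)))⁻¹) := by
      have := (hBmul.hasProd.tendsto_prod_nat).inv₀ (ne_of_gt hBposv)
      refine this.congr (fun N => ?_)
      rw [← Finset.prod_inv_distrib]
    exact tendsto_nhds_unique t1 t2
  have hCoddstmt : (∏' n : ℕ, (1 - q ^ (2 * (n + 1) - 1))) = ∏' n : ℕ, (1 - q ^ (2 * n + 1)) :=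
    tprod_congr (fun n => by rw [show 2 * (n + 1) - 1 = 2 * n + 1 from by omega])
  refine ⟨hS1, hS2, ?_, ?_, ?_⟩
  · rw [hval1, hF1]; ring
  · rw [hval2, hF2]; ring
  · rw [hCoddstmt, hCodd_eq, hPE]
end

section
/- There exists a group isomorphism between $\mathrm{Sp}_4(\mathbb{F}_2)$ and the symmetric group on $6$ elements. In particular, $\#\mathrm{Sp}_4(\mathbb{F}_2) = 720$. -/
open Matrix

/-- The standard symplectic form matrix `Ω = [[0, I₂], [-I₂, 0]]` over `F₂`. -/
def Om2 : Matrix (Fin 2 ⊕ Fin 2) (Fin 2 ⊕ Fin 2) (ZMod 2) :=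
  Matrix.fromBlocks 0 1 (-1) 0

private lemma sp_mul_aux {R n : Type} [CommRing R] [Fintype n] [DecidableEq n]
    (Ω A B : Matrix n n R) (hA : Aᵀ * Ω * A = Ω) (hB : Bᵀ * Ω * B = Ω) :
    (A * B)ᵀ * Ω * (A * B) = Ω := by
  rw [Matrix.transpose_mul]
  have : Bᵀ * Aᵀ * Ω * (A * B) = Bᵀ * (Aᵀ * Ω * A) * B := by
    simp only [mul_assoc]
  rw [this, hA]
  exact hB

private lemma sp_inv_aux {R n : Type} [CommRing R] [Fintype n] [DecidableEq n]
    (Ω A B : Matrix n n R) (hA : Aᵀ * Ω * A = Ω) (hAB : A * B = 1) :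
    Bᵀ * Ω * B = Ω := by
  conv_lhs => rw [← hA]
  have : Bᵀ * (Aᵀ * Ω * A) * B = (A * B)ᵀ * Ω * (A * B) := by
    rw [Matrix.transpose_mul]; simp only [mul_assoc]
  rw [this, hAB]
  simp

/-- `Sp₄(F₂)`: the subgroup of `GL₄(F₂)` consisting of the matrices `M` with
`Mᵀ Ω M = Ω`, a group under matrix multiplication. -/
def Sp4F2 : Subgroup (Matrix (Fin 2 ⊕ Fin 2) (Fin 2 ⊕ Fin 2) (ZMod 2))ˣ where
  carrier := {M | M.valᵀ * Om2 * M.val = Om2}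
  one_mem' := by
    show (1 : (Matrix (Fin 2 ⊕ Fin 2) (Fin 2 ⊕ Fin 2) (ZMod 2))ˣ).valᵀ * Om2 * _ = Om2
    simp
  mul_mem' := by
    intro a b ha hb
    show ((a * b).val)ᵀ * Om2 * (a * b).val = Om2
    rw [Units.val_mul]
    exact sp_mul_aux Om2 a.val b.val ha hb
  inv_mem' := by
    intro a ha
    show ((a⁻¹).val)ᵀ * Om2 * (a⁻¹).val = Om2
    exact sp_inv_aux Om2 a.val (a⁻¹).val ha (Units.mul_inv a)

namespace Stmt18Aux
abbrev Idx := Fin 2 ⊕ Fin 2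
abbrev Vec := Idx → ZMod 2
def q0 (x : Vec) : ZMod 2 := x (.inl 0) * x (.inr 0) + x (.inl 1) * x (.inr 1)
def Bf (u x : Vec) : ZMod 2 := u ⬝ᵥ (Om2 *ᵥ x)
lemma polar : ∀ x y : Vec, q0 (x + y) = q0 x + q0 y + Bf x y := by decide
lemma nondeg : ∀ u w : Vec, (∀ x, Bf u x = Bf w x) → u = w := by decide
lemma omr : ∀ (r : Vec) (j : Idx), Bf (Om2 *ᵥ r) (Pi.single j 1) = r j := by decide
lemma htwo : ∀ a : ZMod 2, a + a = 0 := by decide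
lemma zm2cases : ∀ s : ZMod 2, s = 0 ∨ s = 1 := by decide
lemma basis_expand : ∀ x : Vec,
    x = x (.inl 0) • (Pi.single (.inl 0) 1 : Vec) + (x (.inl 1) • (Pi.single (.inl 1) 1 : Vec) +
      (x (.inr 0) • (Pi.single (.inr 0) 1 : Vec) + x (.inr 1) • (Pi.single (.inr 1) 1 : Vec))) := by decide

lemma add_zero_f (f : Vec → ZMod 2) (hf : ∀ x y, f (x + y) = f x + f y) : f 0 = 0 := by
  have h := hf 0 0
  rw [add_zero] at h
  exact (left_eq_add.mp h)

lemma smul_f (f : Vec → ZMod 2) (hf : ∀ x y, f (x + y) = f x + f y) (s : ZMod 2) (v : Vec) :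
    f (s • v) = s * f v := by
  rcases zm2cases s with rfl | rfl
  · simpa using add_zero_f f hf
  · simp

lemma additive_eval (f : Vec → ZMod 2) (hf : ∀ x y, f (x + y) = f x + f y) (x : Vec) :
    f x = x (.inl 0) * f (Pi.single (.inl 0) 1) + (x (.inl 1) * f (Pi.single (.inl 1) 1) +
      (x (.inr 0) * f (Pi.single (.inr 0) 1) + x (.inr 1) * f (Pi.single (.inr 1) 1))) := by
  conv_lhs => rw [basis_expand x]
  rw [hf, hf, hf, smul_f f hf, smul_f f hf, smul_f f hf, smul_f f hf]

def cv (N : Matrix Idx Idx (ZMod 2)) : Vec :=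
  Om2 *ᵥ (fun j => q0 (N *ᵥ Pi.single j 1) + q0 (Pi.single j 1))

lemma Bf_add_left (u w x : Vec) : Bf (u + w) x = Bf u x + Bf w x := by
  simp [Bf, add_dotProduct]
lemma Bf_add_right (u x y : Vec) : Bf u (x + y) = Bf u x + Bf u y := by
  simp [Bf, mulVec_add, dotProduct_add]

lemma Bf_invariant (N : Matrix Idx Idx (ZMod 2)) (h : Nᵀ * Om2 * N = Om2) (u x : Vec) :
    Bf (N *ᵥ u) (N *ᵥ x) = Bf u x := by
  have h1 : N *ᵥ u = u ᵥ* Nᵀ := by rw [vecMul_transpose]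
  rw [Bf, h1, mulVec_mulVec, dotProduct_mulVec, vecMul_vecMul, ← Matrix.mul_assoc, h,
    ← dotProduct_mulVec]
  rfl

lemma cv_spec (N : Matrix Idx Idx (ZMod 2)) (h : Nᵀ * Om2 * N = Om2) (x : Vec) :
    Bf (cv N) x = q0 (N *ᵥ x) + q0 x := by
  have hg : ∀ a b : Vec, Bf (cv N) (a + b) = Bf (cv N) a + Bf (cv N) b := fun a b =>
    Bf_add_right _ a b
  have hf : ∀ a b : Vec, (q0 (N *ᵥ (a + b)) + q0 (a + b)) =
      (q0 (N *ᵥ a) + q0 a) + (q0 (N *ᵥ b) + q0 b) := by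
    intro a b
    rw [mulVec_add, polar, polar, Bf_invariant N h]
    linear_combination htwo (Bf a b)
  rw [additive_eval _ hg x, additive_eval (fun y => q0 (N *ᵥ y) + q0 y) hf x]
  simp only [cv, omr]

def mat (M : Sp4F2) : Matrix Idx Idx (ZMod 2) := (M : (Matrix Idx Idx (ZMod 2))ˣ).val

lemma mat_symp (M : Sp4F2) : (mat M)ᵀ * Om2 * mat M = Om2 := M.2

lemma mat_mul (M N : Sp4F2) : mat (M * N) = mat M * mat N := rfl

lemma mat_mul_inv (M : Sp4F2) : mat M * mat M⁻¹ = 1 := by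
  have : (M * M⁻¹ : Sp4F2) = 1 := mul_inv_cancel M
  have h2 := congrArg mat this
  rw [mat_mul] at h2
  exact h2

lemma mat_inv_mul (M : Sp4F2) : mat M⁻¹ * mat M = 1 := by
  have : (M⁻¹ * M : Sp4F2) = 1 := inv_mul_cancel M
  have h2 := congrArg mat this
  rw [mat_mul] at h2
  exact h2

def g (M : Sp4F2) (v : Vec) : Vec := mat M *ᵥ v + cv (mat M⁻¹)

lemma cocycle (M N : Sp4F2) : cv (mat (M * N)⁻¹) = mat M *ᵥ cv (mat N⁻¹) + cv (mat M⁻¹) := by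
  apply nondeg
  intro x
  rw [Bf_add_left]
  rw [cv_spec _ (mat_symp _)]
  have h1 : mat (M * N)⁻¹ = mat N⁻¹ * mat M⁻¹ := by
    rw [_root_.mul_inv_rev]; rfl
  rw [h1, ← mulVec_mulVec]
  have h2 : Bf (mat M *ᵥ cv (mat N⁻¹)) x = Bf (cv (mat N⁻¹)) (mat M⁻¹ *ᵥ x) := by
    conv_rhs => rw [← Bf_invariant (mat M) (mat_symp M) (cv (mat N⁻¹)) (mat M⁻¹ *ᵥ x)]
    rw [mulVec_mulVec, mat_mul_inv, one_mulVec]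
  rw [h2, cv_spec _ (mat_symp N⁻¹), cv_spec _ (mat_symp M⁻¹)]
  linear_combination -htwo (q0 (mat M⁻¹ *ᵥ x))

lemma g_mul (M N : Sp4F2) (v : Vec) : g (M * N) v = g M (g N v) := by
  simp only [g, mat_mul, mulVec_add, mulVec_mulVec, cocycle, add_assoc]

lemma cv_one : cv (1 : Matrix Idx Idx (ZMod 2)) = 0 := by decide

lemma mat_one : mat (1 : Sp4F2) = 1 := rfl

lemma g_one (v : Vec) : g 1 v = v := by
  simp [g, mat_one, cv_one, inv_one]

lemma g_left_inv (M : Sp4F2) (v : Vec) : g M⁻¹ (g M v) = v := by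
  rw [← g_mul, inv_mul_cancel, g_one]

lemma g_right_inv (M : Sp4F2) (v : Vec) : g M (g M⁻¹ v) = v := by
  rw [← g_mul, mul_inv_cancel, g_one]

-- key pointwise identity
lemma key (M : Sp4F2) (v x : Vec) :
    q0 (mat M⁻¹ *ᵥ x) + Bf v (mat M⁻¹ *ᵥ x) = q0 x + Bf (g M v) x := by
  have h2 : Bf v (mat M⁻¹ *ᵥ x) = Bf (mat M *ᵥ v) x := by
    conv_lhs => rw [← Bf_invariant (mat M) (mat_symp M) v (mat M⁻¹ *ᵥ x)]
    rw [mulVec_mulVec, mat_mul_inv, one_mulVec]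
  rw [h2, g, Bf_add_left, cv_spec _ (mat_symp M⁻¹) x]
  linear_combination -htwo (q0 x)

lemma count6 : ∀ w : Vec,
    (q0 w = 1 ↔ (Finset.univ.filter (fun x : Vec => q0 x + Bf w x = 1)).card = 10) := by decide

lemma g_mem (M : Sp4F2) (v : Vec) (hv : q0 v = 1) : q0 (g M v) = 1 := by
  rw [count6]
  have h1 : (Finset.univ.filter (fun x : Vec => q0 x + Bf (g M v) x = 1)).card
      = (Finset.univ.filter (fun x : Vec => q0 x + Bf v x = 1)).card := by
    have hcong : Finset.univ.filter (fun x : Vec => q0 x + Bf (g M v) x = 1)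
        = Finset.univ.filter (fun x : Vec => q0 (mat M⁻¹ *ᵥ x) + Bf v (mat M⁻¹ *ᵥ x) = 1) := by
      apply Finset.filter_congr
      intro x _
      rw [key]
    rw [hcong]
    apply Finset.card_bij' (fun x _ => mat M⁻¹ *ᵥ x) (fun y _ => mat M *ᵥ y)
    · intro x hx
      simp only [Finset.mem_filter, Finset.mem_univ, true_and] at hx ⊢
      exact hx
    · intro y hy
      simp only [Finset.mem_filter, Finset.mem_univ, true_and] at hy ⊢
      rw [mulVec_mulVec, mat_inv_mul, one_mulVec]
      exact hy
    · intro x _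
      rw [mulVec_mulVec, mat_mul_inv, one_mulVec]
    · intro y _
      rw [mulVec_mulVec, mat_inv_mul, one_mulVec]
  rw [h1, ← count6]
  exact hv


def V : Type := {v : Vec // q0 v = 1}

instance : Fintype V := inferInstanceAs (Fintype {v : Vec // q0 v = 1})
instance : DecidableEq V := inferInstanceAs (DecidableEq {v : Vec // q0 v = 1})

def ψraw (M : Sp4F2) : Equiv.Perm V where
  toFun v := ⟨g M v.1, g_mem M v.1 v.2⟩
  invFun v := ⟨g M⁻¹ v.1, g_mem M⁻¹ v.1 v.2⟩
  left_inv v := Subtype.ext (g_left_inv M v.1)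
  right_inv v := Subtype.ext (g_right_inv M v.1)

def ψ : Sp4F2 →* Equiv.Perm V :=
  MonoidHom.mk' ψraw (by
    intro M N
    ext v
    exact Subtype.ext (g_mul M N v.1))

def vlit (a b c d : ZMod 2) : Vec := Sum.elim ![a, b] ![c, d]

set_option maxHeartbeats 2000000 in
lemma sum_pairs : (vlit 0 1 0 1 + vlit 1 1 0 1 = (Pi.single (.inl 0) 1 : Vec))
    ∧ (vlit 1 0 1 0 + vlit 1 1 1 0 = (Pi.single (.inl 1) 1 : Vec))
    ∧ (vlit 0 1 0 1 + vlit 0 1 1 1 = (Pi.single (.inr 0) 1 : Vec))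
    ∧ (vlit 1 0 1 0 + vlit 1 0 1 1 = (Pi.single (.inr 1) 1 : Vec)) := by decide

set_option maxHeartbeats 2000000 in
lemma q0_vlits : q0 (vlit 0 1 0 1) = 1 ∧ q0 (vlit 1 1 0 1) = 1 ∧ q0 (vlit 1 0 1 0) = 1
    ∧ q0 (vlit 1 1 1 0) = 1 ∧ q0 (vlit 0 1 1 1) = 1 ∧ q0 (vlit 1 0 1 1) = 1 := by decide

lemma psi_inj : Function.Injective ψ := by
  rw [injective_iff_map_eq_one]
  intro M hM
  have hfix : ∀ v : Vec, q0 v = 1 → g M v = v := by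
    intro v hv
    exact congrArg Subtype.val (Equiv.ext_iff.mp hM ⟨v, hv⟩)
  have hcc : ∀ u : Vec, u + cv (mat M⁻¹) + cv (mat M⁻¹) = u := by
    intro u; funext i
    simp only [Pi.add_apply, add_assoc, htwo, add_zero]
  have hone : ∀ v : Vec, q0 v = 1 → mat M *ᵥ v = v + cv (mat M⁻¹) := by
    intro v hv
    have h1 : mat M *ᵥ v + cv (mat M⁻¹) = v := hfix v hv
    calc mat M *ᵥ v = mat M *ᵥ v + cv (mat M⁻¹) + cv (mat M⁻¹) := (hcc (mat M *ᵥ v)).symm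
      _ = v + cv (mat M⁻¹) := by rw [h1]
  have hpair : ∀ v w : Vec, q0 v = 1 → q0 w = 1 → mat M *ᵥ (v + w) = v + w := by
    intro v w hv hw
    rw [mulVec_add, hone v hv, hone w hw]
    have : v + cv (mat M⁻¹) + (w + cv (mat M⁻¹)) = v + w + cv (mat M⁻¹) + cv (mat M⁻¹) := by
      ring
    rw [this, hcc (v + w)]
  obtain ⟨hs1, hs2, hs3, hs4⟩ := sum_pairs
  obtain ⟨hq1, hq2, hq3, hq4, hq5, hq6⟩ := q0_vlits
  have hbasis : ∀ j : Idx, mat M *ᵥ (Pi.single j 1 : Vec) = Pi.single j 1 := by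
    intro j
    match j with
    | .inl 0 => rw [← hs1]; exact hpair _ _ hq1 hq2
    | .inl 1 => rw [← hs2]; exact hpair _ _ hq3 hq4
    | .inr 0 => rw [← hs3]; exact hpair _ _ hq1 hq5
    | .inr 1 => rw [← hs4]; exact hpair _ _ hq3 hq6
  have hmat : mat M = 1 := by
    ext i j
    have := congrFun (hbasis j) i
    rw [mulVec_single] at this
    simp only [MulOpposite.op_one, one_smul, Matrix.col_apply] at this
    rw [this]
    simp [Matrix.one_apply, Pi.single_apply, eq_comm]
  exact Subtype.ext (Units.ext hmat)

-- explicit generators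
def A1 : Matrix Idx Idx (ZMod 2) :=
  fromBlocks !![0,1;1,0] !![0,1;1,0] !![0,1;1,0] !![0,0;0,0]
def A1i : Matrix Idx Idx (ZMod 2) :=
  fromBlocks !![0,0;0,0] !![0,1;1,0] !![0,1;1,0] !![0,1;1,0]
def A2 : Matrix Idx Idx (ZMod 2) :=
  fromBlocks !![0,1;0,1] !![1,0;0,0] !![1,1;1,1] !![0,0;1,1]

def U1 : (Matrix Idx Idx (ZMod 2))ˣ := ⟨A1, A1i, by decide, by decide⟩
def U2 : (Matrix Idx Idx (ZMod 2))ˣ := ⟨A2, A2, by decide, by decide⟩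

def M1 : Sp4F2 := ⟨U1, show U1.valᵀ * Om2 * U1.val = Om2 by decide⟩
def M2 : Sp4F2 := ⟨U2, show U2.valᵀ * Om2 * U2.val = Om2 by decide⟩

def tab : Fin 6 → Vec :=
  ![vlit 0 1 0 1, vlit 0 1 1 1, vlit 1 0 1 0, vlit 1 0 1 1, vlit 1 1 0 1, vlit 1 1 1 0]

def idx (v : Vec) : Fin 6 :=
  if v = tab 0 then 0 else if v = tab 1 then 1 else if v = tab 2 then 2
  else if v = tab 3 then 3 else if v = tab 4 then 4 else 5

set_option maxHeartbeats 2000000 in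
lemma tab_mem : ∀ i, q0 (tab i) = 1 := by decide

set_option maxHeartbeats 4000000 in
def E : V ≃ Fin 6 where
  toFun v := idx v.1
  invFun i := ⟨tab i, tab_mem i⟩
  left_inv := by
    intro v
    apply Subtype.ext
    rcases v with ⟨v, hv⟩
    revert hv
    revert v
    decide
  right_inv := by intro i; revert i; decide

def pc : Equiv.Perm V ≃* Equiv.Perm (Fin 6) where
  toFun σ := E.permCongr σ
  invFun τ := E.symm.permCongr τ
  left_inv σ := by ext v; simp [Equiv.permCongr]
  right_inv τ := by ext i; simp [Equiv.permCongr]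
  map_mul' a b := by ext i; simp [Equiv.permCongr]

def Φ : Sp4F2 →* Equiv.Perm (Fin 6) := pc.toMonoidHom.comp ψ

def c6 : Equiv.Perm (Fin 6) := ([0, 5, 1, 2, 4, 3] : List (Fin 6)).formPerm

set_option maxHeartbeats 4000000 in
lemma phi_M1 : Φ M1 = c6 := by
  apply Equiv.ext
  decide

set_option maxHeartbeats 4000000 in
lemma phi_M2 : Φ M2 = Equiv.swap (0 : Fin 6) (c6 0) := by
  apply Equiv.ext
  decide

lemma c6_isCycle : c6.IsCycle :=
  List.isCycle_formPerm (by decide) (by decide)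

lemma c6_support : c6.support = Finset.univ := by
  unfold c6
  rw [List.support_formPerm_of_nodup _ (by decide) (by decide)]
  decide

lemma phi_surj : Function.Surjective Φ := by
  rw [← MonoidHom.range_eq_top, eq_top_iff,
    ← Equiv.Perm.closure_cycle_adjacent_swap c6_isCycle c6_support 0, Subgroup.closure_le]
  rintro x (rfl | rfl)
  · exact ⟨M1, phi_M1⟩
  · exact ⟨M2, phi_M2⟩

lemma phi_inj : Function.Injective Φ :=
  pc.injective.comp psi_inj

end Stmt18Aux


open Stmt18Aux in
/-- There is a group isomorphism between `Sp₄(F₂)` and the symmetric group on six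
elements; in particular `#Sp₄(F₂) = 720`. -/
theorem stmt18 : Nonempty (Sp4F2 ≃* Equiv.Perm (Fin 6)) ∧ Nat.card Sp4F2 = 720 := by
  have iso : Sp4F2 ≃* Equiv.Perm (Fin 6) := MulEquiv.ofBijective Φ ⟨phi_inj, phi_surj⟩
  refine ⟨⟨iso⟩, ?_⟩
  rw [Nat.card_congr iso.toEquiv, Nat.card_eq_fintype_card, Fintype.card_perm]
  decide
end
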